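/- arXiv:1210.5993 — 4 statements merged into one kernel-verified Lean document; each statement's English description precedes it below -/
import Mathlib

section
/- Let T be a quiver, α₀ : p → q an arrow of T such that the vertex q is incident to no arrow of T other than α₀, and let T' be the quiver obtained from T by removing q and α₀. Let M be a representation of T over a field K with ordered basis B such that every element of B ∖ B_q precedes every element of B_q and the matrix of M_{α₀} with respect to the ordered bases B_p and B_q is the identity matrix. Let M' be the restriction of M to T', β ⊆ B with M_{α₀}(β_p) ⊆ β_q, and β' = β ∖ β_q. Then there is a bijection C_β^M ≅ C_{β'}^{M'} × K^n whose first component is the restriction map V ↦ (V_r)_{r∈T'0}, where n = Σ_{b ∈ β_q ∖ M_{α₀}(β_p)} #{b' ∈ B_q : b' < b and b' ∉ β_q}. -/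
open scoped Classical

noncomputable section

namespace QGr

/-- A representation of the quiver with vertex set `V0` and arrow set `A`
(source and target maps are part of the data), given in coordinates with respect to
an ordered basis `B`: the basis element `b : B` sits at the vertex `vtx b`, the space
at the vertex `p` is `{b : B // vtx b = p} → K`, and `mmap a` is the map attached to
the arrow `a`. -/
structure Rep (K : Type) [Field K] (V0 A B : Type) where
  src : A → V0
  tgt : A → V0
  vtx : B → V0
  mmap : ∀ a : A, ({b : B // vtx b = src a} → K) → ({b : B // vtx b = tgt a} → K)

namespace Rep

variable {K : Type} [Field K] {V0 A B : Type}

/-- A collection of subspaces, one at each vertex. -/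
def SubRep (R : Rep K V0 A B) : Type :=
  ∀ p : V0, Submodule K ({b : B // R.vtx b = p} → K)

/-- The collection `W` is a subrepresentation. -/
def IsSubrep (R : Rep K V0 A B) (W : R.SubRep) : Prop :=
  ∀ a : A, ∀ x ∈ W (R.src a), R.mmap a x ∈ W (R.tgt a)

/-- All structure maps are `K`-linear. -/
def Linear (R : Rep K V0 A B) : Prop := ∀ a : A, IsLinearMap K (R.mmap a)

/-- Membership in the Schubert cell attached to `β ⊆ B`: each `W p` is spanned by vectors
`v b₀ = b₀ + ∑ λ_{b',b₀} b'` (`b₀ ∈ β ∩ B_p`), the sum over `b' < b₀` with `b' ∉ β`. -/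
def InCell [LinearOrder B] (R : Rep K V0 A B) (β : Finset B) (W : R.SubRep) : Prop :=
  ∀ p : V0, ∃ v : {b : B // b ∈ β ∧ R.vtx b = p} → ({b : B // R.vtx b = p} → K),
    (∀ b0, v b0 ⟨b0.val, b0.prop.2⟩ = 1) ∧
    (∀ b0 b1, b1.val ≠ b0.val → ¬(b1.val < b0.val ∧ b1.val ∉ β) → v b0 b1 = 0) ∧
    W p = Submodule.span K (Set.range v)

/-- The Schubert cell `C_β^M`. -/
def Cell [LinearOrder B] (R : Rep K V0 A B) (β : Finset B) : Set R.SubRep :=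
  {W | R.IsSubrep W ∧
    (∀ p : V0, Module.finrank K (W p) = (β.filter fun b => R.vtx b = p).card) ∧
    R.InCell β W}

/-- The quiver Grassmannian `Gr_e(M)`. -/
def Gr (R : Rep K V0 A B) (e : V0 → ℕ) : Set R.SubRep :=
  {W | R.IsSubrep W ∧ ∀ p : V0, Module.finrank K (W p) = e p}

/-- Collections of subspaces indexed by the vertices in `S0`. -/
def SubRepOn (R : Rep K V0 A B) (S0 : Set V0) : Type :=
  ∀ p : {p : V0 // p ∈ S0}, Submodule K ({b : B // R.vtx b = ↑p} → K)

/-- Subrepresentation condition over the subquiver `(S0, S1)`. -/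
def IsSubrepOn (R : Rep K V0 A B) (S0 : Set V0) (S1 : Set A) (W : R.SubRepOn S0) : Prop :=
  ∀ a : A, a ∈ S1 → ∀ (h1 : R.src a ∈ S0) (h2 : R.tgt a ∈ S0),
    ∀ x ∈ W ⟨R.src a, h1⟩, R.mmap a x ∈ W ⟨R.tgt a, h2⟩

/-- Cell membership over the vertices in `S0`. -/
def InCellOn [LinearOrder B] (R : Rep K V0 A B) (S0 : Set V0) (β : Finset B)
    (W : R.SubRepOn S0) : Prop :=
  ∀ p : {p : V0 // p ∈ S0},
    ∃ v : {b : B // b ∈ β ∧ R.vtx b = ↑p} → ({b : B // R.vtx b = ↑p} → K),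
      (∀ b0, v b0 ⟨b0.val, b0.prop.2⟩ = 1) ∧
      (∀ b0 b1, b1.val ≠ b0.val → ¬(b1.val < b0.val ∧ b1.val ∉ β) → v b0 b1 = 0) ∧
      W p = Submodule.span K (Set.range v)

/-- The Schubert cell of the restriction of the representation to the subquiver `(S0, S1)`. -/
def CellOn [LinearOrder B] (R : Rep K V0 A B) (S0 : Set V0) (S1 : Set A) (β : Finset B) :
    Set (R.SubRepOn S0) :=
  {W | R.IsSubrepOn S0 S1 W ∧
    (∀ p : {p : V0 // p ∈ S0},
      Module.finrank K (W p) = (β.filter fun b => R.vtx b = ↑p).card) ∧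
    R.InCellOn S0 β W}

/-- The quiver Grassmannian of the restriction to the subquiver `(S0, S1)`. -/
def GrOn (R : Rep K V0 A B) (S0 : Set V0) (S1 : Set A) (e : V0 → ℕ) :
    Set (R.SubRepOn S0) :=
  {W | R.IsSubrepOn S0 S1 W ∧ ∀ p : {p : V0 // p ∈ S0}, Module.finrank K (W p) = e ↑p}

/-- Restriction of a collection of subspaces to the vertices in `S0`. -/
def resOn (R : Rep K V0 A B) (S0 : Set V0) (W : R.SubRep) : R.SubRepOn S0 :=
  fun p => W ↑p

/-- `p < q` for vertices: every basis element at `p` precedes every basis element at `q`. -/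
def vlt [LT B] (R : Rep K V0 A B) (p q : V0) : Prop :=
  ∀ b b' : B, R.vtx b = p → R.vtx b' = q → b < b'

def vle [LT B] (R : Rep K V0 A B) (p q : V0) : Prop := p = q ∨ R.vlt p q

/-- The matrix of `mmap a` with respect to the ordered bases at source and target is a
(square) identity matrix. -/
def IsIdMat [LinearOrder B] (R : Rep K V0 A B) (a : A) : Prop :=
  ∃ e : {b : B // R.vtx b = R.src a} ≃o {b : B // R.vtx b = R.tgt a},
    ∀ i, R.mmap a (Pi.single i 1) = Pi.single (e i) 1

/-- `mmap a` sends the basis vector `b0` to the basis vector `b1`. -/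
def MapsBasisTo (R : Rep K V0 A B) (a : A) (b0 b1 : B) : Prop :=
  ∃ (h0 : R.vtx b0 = R.src a) (h1 : R.vtx b1 = R.tgt a),
    R.mmap a (Pi.single ⟨b0, h0⟩ 1) = Pi.single ⟨b1, h1⟩ 1

/-- The ordered basis `B` is ordered above the subquiver `(S0, S1)`. -/
def OrderedAbove [LinearOrder B] (R : Rep K V0 A B) (S0 : Set V0) (S1 : Set A) : Prop :=
  (∀ b b' : B, R.vtx b ∈ S0 → R.vtx b' ∉ S0 → b < b') ∧
  (∀ p q : V0, p ≠ q → R.vlt p q ∨ R.vlt q p) ∧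
  (∀ (r : ℕ) (pa : Fin (r+1) → V0), pa 0 ∈ S0 → (∀ i, i ≠ 0 → pa i ∉ S0) →
    Function.Injective pa →
    (∀ i : Fin r, ∃ a : A, (R.src a = pa i.castSucc ∧ R.tgt a = pa i.succ) ∨
      (R.src a = pa i.succ ∧ R.tgt a = pa i.castSucc)) →
    ∀ i : Fin r, R.vlt (pa i.castSucc) (pa i.succ)) ∧
  (∀ a : A, a ∉ S1 → R.IsIdMat a)

end Rep

/-- The relation on the vertices of the subquiver with vertex set `T0` identifying all
vertices of `S0` with each other. -/
def treeRel {V0 : Type} (S0 T0 : Set V0) :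
    {v : V0 // v ∈ T0} → {v : V0 // v ∈ T0} → Prop :=
  fun x y => (↑x ∈ S0 ∧ ↑y ∈ S0)

/-- The subquiver `(T0, T1)` is a tree extension of the subquiver `(S0, S1)`:
the quotient quiver `T/S` (arrows of `T` not in `S`; vertices of `T` with all vertices of `S`
identified) is a tree, i.e. it is connected (as an undirected graph) and the number of its
edges is one less than the number of its vertices. -/
def IsTreeExtensionIn {V0 A : Type} (src tgt : A → V0) (T0 : Set V0) (T1 : Set A)
    (S0 : Set V0) (S1 : Set A) : Prop :=
  (∀ u v : Quot (treeRel S0 T0), Relation.ReflTransGen (fun u v =>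
      ∃ a : A, a ∈ T1 ∧ a ∉ S1 ∧ ∃ (hs : src a ∈ T0) (ht : tgt a ∈ T0),
        (Quot.mk (treeRel S0 T0) ⟨src a, hs⟩ = u ∧ Quot.mk (treeRel S0 T0) ⟨tgt a, ht⟩ = v) ∨
        (Quot.mk (treeRel S0 T0) ⟨src a, hs⟩ = v ∧ Quot.mk (treeRel S0 T0) ⟨tgt a, ht⟩ = u))
      u v) ∧
  Nat.card {a : A // a ∈ T1 ∧ a ∉ S1} + 1 = Nat.card (Quot (treeRel S0 T0))

/-- `T` (the full ambient quiver) is a tree extension of the subquiver `(S0, S1)`. -/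
def IsTreeExtension {V0 A : Type} (src tgt : A → V0) (S0 : Set V0) (S1 : Set A) : Prop :=
  IsTreeExtensionIn src tgt Set.univ Set.univ S0 S1

namespace Rep

variable {K : Type} [Field K] {V0 A B QV QA : Type}

/-- The structure map of the push-forward representation `F_*M` attached to the arrow `aq`
of the target quiver. -/
def pushMap [Fintype A] (R : Rep K V0 A B) (qsrc qtgt : QA → QV) (Fv : V0 → QV)
    (Fa : A → QA) (hFs : ∀ a : A, Fv (R.src a) = qsrc (Fa a)) (aq : QA)
    (x : {b : B // Fv (R.vtx b) = qsrc aq} → K) (c : {b : B // Fv (R.vtx b) = qtgt aq}) : K :=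
  ∑ α : A, if hα : Fa α = aq then
    (if hc : R.vtx c.val = R.tgt α then
      R.mmap α (fun b => x ⟨b.val, by rw [b.prop, hFs α, hα]⟩) ⟨c.val, hc⟩
    else 0) else 0

/-- The push-forward representation `F_*M` along the quiver morphism `F = (Fv, Fa)`. -/
def push [Fintype A] (R : Rep K V0 A B) (qsrc qtgt : QA → QV) (Fv : V0 → QV)
    (Fa : A → QA) (hFs : ∀ a : A, Fv (R.src a) = qsrc (Fa a)) : Rep K QV QA B where
  src := qsrc
  tgt := qtgt
  vtx := fun b => Fv (R.vtx b)
  mmap := R.pushMap qsrc qtgt Fv Fa hFs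

/-- The push-forward `F_*V` of a collection of subspaces: at the vertex `q` of `Q` it consists
of all vectors whose component in each `M_p` with `Fv p = q` lies in `V_p`. -/
def pushSub (R : Rep K V0 A B) (Fv : V0 → QV) (W : R.SubRep) :
    ∀ q : QV, Submodule K ({b : B // Fv (R.vtx b) = q} → K) := fun q =>
  { carrier := {x | ∀ (p : V0) (hq : Fv p = q),
      (fun b : {b : B // R.vtx b = p} =>
        x ⟨b.val, by rw [b.prop]; exact hq⟩) ∈ W p}
    add_mem' := fun hx hy p hq => (W p).add_mem (hx p hq) (hy p hq)
    zero_mem' := fun p hq => (W p).zero_mem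
    smul_mem' := fun c x hx p hq => (W p).smul_mem c (hx p hq) }

/-- `reach n p` : there is an (undirected) walk of length `n` from `p` into `S0`. -/
def reach (R : Rep K V0 A B) (S0 : Set V0) : ℕ → V0 → Prop
  | 0, p => p ∈ S0
  | (n+1), p => ∃ a : A, (R.src a = p ∧ R.reach S0 n (R.tgt a)) ∨
      (R.tgt a = p ∧ R.reach S0 n (R.src a))

/-- The graph distance from `p` to the vertex set `S0`. -/
def distS (R : Rep K V0 A B) (S0 : Set V0) (p : V0) : ℕ :=
  sInf {n : ℕ | R.reach S0 n p}

/-- The fibre length `ε(p,p')` of a pair of vertices. -/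
def eps [LT B] (R : Rep K V0 A B) (Fv : V0 → QV) (p p' : V0) : ℕ :=
  Set.ncard {p'' : V0 | Fv p'' = Fv p ∧ R.vle p p'' ∧ R.vlt p'' p'}

/-- Lexicographic comparison `Ψ(p,p') < Ψ(q,q')`. -/
def psiLt [LT B] (R : Rep K V0 A B) (S0 : Set V0) (Fv : V0 → QV) (p p' q q' : V0) : Prop :=
  R.eps Fv p p' < R.eps Fv q q' ∨ (R.eps Fv p p' = R.eps Fv q q' ∧
    (max (R.distS S0 p) (R.distS S0 p') < max (R.distS S0 q) (R.distS S0 q') ∨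
     (max (R.distS S0 p) (R.distS S0 p') = max (R.distS S0 q) (R.distS S0 q') ∧
       R.vlt p' q')))

def type0 [LT B] (R : Rep K V0 A B) (Fa : A → QA) (aq : QA) (t s : V0) : Prop :=
  ¬ ∃ α : A, Fa α = aq ∧ R.vle (R.src α) s ∧ R.vle t (R.tgt α)

def type1 (R : Rep K V0 A B) (Fa : A → QA) (aq : QA) (t s : V0) : Prop :=
  ∃ α : A, Fa α = aq ∧ R.src α = s ∧ R.tgt α = t

def type2a [LT B] (R : Rep K V0 A B) (S0 : Set V0) (Fv : V0 → QV) (Fa : A → QA)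
    (aq : QA) (t s : V0) : Prop :=
  ∃ α' α'' : A, Fa α' = aq ∧ Fa α'' = aq ∧ R.tgt α' = t ∧ R.vlt (R.src α') s ∧
    R.src α'' = s ∧ R.vlt (R.tgt α'') t ∧ R.psiLt S0 Fv t (R.tgt α'') (R.src α') s

def type2b [LT B] (R : Rep K V0 A B) (S0 : Set V0) (Fv : V0 → QV) (Fa : A → QA)
    (aq : QA) (t s : V0) : Prop :=
  ∃ α' α'' : A, Fa α' = aq ∧ Fa α'' = aq ∧ R.tgt α' = t ∧ R.vlt (R.src α') s ∧
    R.src α'' = s ∧ R.vlt (R.tgt α'') t ∧ R.psiLt S0 Fv (R.src α') s t (R.tgt α'')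

def type3a [LT B] (R : Rep K V0 A B) (S0 : Set V0) (Fv : V0 → QV) (Fa : A → QA)
    (aq : QA) (t s : V0) : Prop :=
  ∃ α'' : A, Fa α'' = aq ∧ R.src α'' = s ∧ R.vlt t (R.tgt α'') ∧
    (¬ ∃ α : A, Fa α = aq ∧ R.tgt α = t) ∧
    ∀ α : A, Fa α = aq → R.vlt t (R.tgt α) → R.vlt (R.tgt α) (R.tgt α'') →
      R.psiLt S0 Fv (R.src α) s t (R.tgt α'')

def type4a [LT B] (R : Rep K V0 A B) (S0 : Set V0) (Fv : V0 → QV) (Fa : A → QA)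
    (aq : QA) (t s : V0) : Prop :=
  ∃ α' : A, Fa α' = aq ∧ R.tgt α' = t ∧ R.vlt (R.src α') s ∧
    (¬ ∃ α : A, Fa α = aq ∧ R.src α = s) ∧
    ∀ α : A, Fa α = aq → R.vlt (R.src α') (R.src α) → R.vlt (R.src α) s →
      R.psiLt S0 Fv t (R.tgt α) (R.src α') s

/-- `F` is strictly ordered with respect to the ordered basis. -/
def StrictlyOrdered [LT B] (R : Rep K V0 A B) (Fa : A → QA) : Prop :=
  ∀ α α' : A, α ≠ α' → Fa α = Fa α' →
    (R.vlt (R.src α) (R.src α') ∧ R.vlt (R.tgt α) (R.tgt α')) ∨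
    (R.vlt (R.src α') (R.src α) ∧ R.vlt (R.tgt α') (R.tgt α))

/-- The pair `(p, p')` is a relevant pair. -/
def relPair [LT B] (R : Rep K V0 A B) (S0 : Set V0) (Fv : V0 → QV) (p p' : V0) : Prop :=
  Fv p = Fv p' ∧ R.vle p p' ∧ p' ∉ S0

/-- Condition of Hypothesis (H) on outgoing arrows at the relevant pair `(p, p')`. -/
def outOK [LT B] (R : Rep K V0 A B) (S0 : Set V0) (Fv : V0 → QV) (Fa : A → QA)
    (qsrc qtgt : QA → QV) (p p' : V0) (aq : QA) : Prop :=
  qsrc aq = Fv p →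
    ((¬ ∃ α : A, Fa α = aq ∧ R.src α = p') →
      ∀ q : V0, Fv q = qtgt aq → R.type0 Fa aq q p') ∧
    ((∃ α : A, Fa α = aq ∧ R.src α = p') →
      ∃ α : A, Fa α = aq ∧ R.src α = p ∧
        (R.type1 Fa aq (R.tgt α) p' ∨ R.type2b S0 Fv Fa aq (R.tgt α) p'))

/-- Condition of Hypothesis (H) on incoming arrows at the relevant pair `(p, p')`. -/
def inOK [LT B] (R : Rep K V0 A B) (S0 : Set V0) (Fv : V0 → QV) (Fa : A → QA)
    (qsrc qtgt : QA → QV) (p p' : V0) (aq : QA) : Prop :=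
  qtgt aq = Fv p →
    ((¬ ∃ α : A, Fa α = aq ∧ R.tgt α = p) →
      ∀ q' : V0, Fv q' = qsrc aq → R.type0 Fa aq p q') ∧
    ((∃ α : A, Fa α = aq ∧ R.tgt α = p) →
      ∃ α : A, Fa α = aq ∧ R.tgt α = p' ∧
        (R.type1 Fa aq p (R.src α) ∨ R.type2a S0 Fv Fa aq p (R.src α)))

/-- Exceptional situation (1) of Hypothesis (H). -/
def exc1 [LinearOrder B] (R : Rep K V0 A B) (S0 : Set V0) (S1 : Set A) (Fv : V0 → QV)
    (Fa : A → QA) (qsrc : QA → QV) (p p' : V0) (aq : QA) : Prop :=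
  qsrc aq = Fv p ∧ ∃ α : A, Fa α = aq ∧ R.src α = p ∧
    (R.type2a S0 Fv Fa aq (R.tgt α) p' ∨ R.type4a S0 Fv Fa aq (R.tgt α) p') ∧
    (α ∈ S1 → R.IsIdMat α)

/-- Exceptional situation (2) of Hypothesis (H). -/
def exc2 [LT B] (R : Rep K V0 A B) (S0 : Set V0) (Fv : V0 → QV) (Fa : A → QA)
    (qtgt : QA → QV) (p p' : V0) (aq : QA) : Prop :=
  qtgt aq = Fv p ∧ ∃ α : A, Fa α = aq ∧ R.tgt α = p' ∧
    (R.type2b S0 Fv Fa aq p (R.src α) ∨ R.type3a S0 Fv Fa aq p (R.src α))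

/-- Hypothesis (H). -/
def HypH [LinearOrder B] (R : Rep K V0 A B) (S0 : Set V0) (S1 : Set A)
    (qsrc qtgt : QA → QV) (Fv : V0 → QV) (Fa : A → QA) : Prop :=
  R.StrictlyOrdered Fa ∧
  ∀ p p' : V0, R.relPair S0 Fv p p' →
    ((∀ aq : QA, R.outOK S0 Fv Fa qsrc qtgt p p' aq ∧ R.inOK S0 Fv Fa qsrc qtgt p p' aq) ∨
     (∃ aq0 : QA,
        (R.exc1 S0 S1 Fv Fa qsrc p p' aq0 ∨ R.exc2 S0 Fv Fa qtgt p p' aq0) ∧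
        ∀ aq : QA, aq ≠ aq0 →
          R.outOK S0 Fv Fa qsrc qtgt p p' aq ∧ R.inOK S0 Fv Fa qsrc qtgt p p' aq))


end Rep

end QGr

namespace QGr
namespace Rep

set_option linter.unusedSectionVars false
set_option maxHeartbeats 1000000

section Piv

variable {K : Type} [Field K] {ι J : Type} [Fintype ι] [Fintype J]

/-- Pivot-normalized family. -/
def PivNorm (ρ : J → ι) (v : J → ι → K) : Prop :=
  (∀ j, v j (ρ j) = 1) ∧ (∀ j j' : J, j' ≠ j → v j (ρ j') = 0)

theorem pivnorm_coords {ρ : J → ι} {v : J → ι → K} (hv : PivNorm ρ v)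
    {x : ι → K} (hx : x ∈ Submodule.span K (Set.range v)) :
    x = ∑ j : J, x (ρ j) • v j := by
  obtain ⟨c, hc⟩ := (Submodule.mem_span_range_iff_exists_fun K).1 hx
  have hcj : ∀ j, x (ρ j) = c j := by
    intro j
    rw [← hc]
    simp only [Finset.sum_apply, Pi.smul_apply, smul_eq_mul]
    rw [Finset.sum_eq_single j]
    · rw [hv.1 j, mul_one]
    · intro i _ hi
      rw [hv.2 i j (Ne.symm hi), mul_zero]
    · intro h; exact absurd (Finset.mem_univ j) h
  simp only [hcj]
  exact hc.symm

theorem pivnorm_eq_zero {ρ : J → ι} {v : J → ι → K} (hv : PivNorm ρ v)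
    {x : ι → K} (hx : x ∈ Submodule.span K (Set.range v))
    (h0 : ∀ j, x (ρ j) = 0) : x = 0 := by
  rw [pivnorm_coords hv hx]
  simp [h0]

theorem pivnorm_indep {ρ : J → ι} {v : J → ι → K} (hv : PivNorm ρ v) :
    LinearIndependent K v := by
  rw [Fintype.linearIndependent_iff]
  intro g hg j
  have := congrFun hg (ρ j)
  simp only [Finset.sum_apply, Pi.smul_apply, smul_eq_mul, Pi.zero_apply] at this
  rwa [Finset.sum_eq_single j, hv.1 j, mul_one] at this
  · intro i _ hi; rw [hv.2 i j (Ne.symm hi), mul_zero]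
  · intro h; exact absurd (Finset.mem_univ j) h

theorem pivnorm_unique {ρ : J → ι} {v w : J → ι → K} (hv : PivNorm ρ v)
    (hw : PivNorm ρ w)
    (hspan : Submodule.span K (Set.range v) = Submodule.span K (Set.range w)) :
    v = w := by
  funext j
  have hvj : v j ∈ Submodule.span K (Set.range w) := by
    rw [← hspan]; exact Submodule.subset_span ⟨j, rfl⟩
  have hwj : w j ∈ Submodule.span K (Set.range w) :=
    Submodule.subset_span ⟨j, rfl⟩
  have hd : v j - w j = 0 := by
    refine pivnorm_eq_zero hw (Submodule.sub_mem _ hvj hwj) ?_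
    intro j'
    by_cases h : j' = j
    · subst h; simp [hv.1 j', hw.1 j']
    · simp [hv.2 j j' h, hw.2 j j' h]
  exact sub_eq_zero.mp hd

end Piv

section Ech

variable {K V0 A B : Type} [Field K] [LinearOrder B]

/-- Echelon condition at a single vertex. -/
def Ech (R : Rep K V0 A B) (β : Finset B) (r : V0)
    (Wr : Submodule K ({b : B // R.vtx b = r} → K)) : Prop :=
  ∃ v : {b : B // b ∈ β ∧ R.vtx b = r} → ({b : B // R.vtx b = r} → K),
    (∀ b0, v b0 ⟨b0.val, b0.prop.2⟩ = 1) ∧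
    (∀ b0 b1, b1.val ≠ b0.val → ¬(b1.val < b0.val ∧ b1.val ∉ β) → v b0 b1 = 0) ∧
    Wr = Submodule.span K (Set.range v)

theorem inCell_iff_ech (R : Rep K V0 A B) (β : Finset B) (W : R.SubRep) :
    R.InCell β W ↔ ∀ r : V0, Ech R β r (W r) := Iff.rfl

theorem inCellOn_iff_ech (R : Rep K V0 A B) (S0 : Set V0) (β : Finset B)
    (W : R.SubRepOn S0) :
    R.InCellOn S0 β W ↔ ∀ r : {p : V0 // p ∈ S0}, Ech R β r.val (W r) := Iff.rfl

theorem ech_pivnorm {R : Rep K V0 A B} {β : Finset B} {r : V0}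
    {v : {b : B // b ∈ β ∧ R.vtx b = r} → ({b : B // R.vtx b = r} → K)}
    (h1 : ∀ b0, v b0 ⟨b0.val, b0.prop.2⟩ = 1)
    (h0 : ∀ b0 b1, b1.val ≠ b0.val → ¬(b1.val < b0.val ∧ b1.val ∉ β) → v b0 b1 = 0) :
    PivNorm (fun b0 : {b : B // b ∈ β ∧ R.vtx b = r} =>
      (⟨b0.val, b0.prop.2⟩ : {b : B // R.vtx b = r})) v := by
  refine ⟨h1, fun j j' hne => ?_⟩
  refine h0 j ⟨j'.val, j'.prop.2⟩ (fun h => hne (Subtype.ext h)) ?_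
  rintro ⟨-, hnot⟩
  exact hnot j'.prop.1

/-- Transfer of the echelon condition between `β` and `β.filter (vtx ≠ q0)`. -/
theorem ech_filter_iff (R : Rep K V0 A B) (β : Finset B) (q0 r : V0) (hr : r ≠ q0)
    (Wr : Submodule K ({b : B // R.vtx b = r} → K)) :
    Ech R (β.filter fun b => R.vtx b ≠ q0) r Wr ↔ Ech R β r Wr := by
  have hmem : ∀ b : B, R.vtx b = r →
      (b ∈ β.filter (fun b => R.vtx b ≠ q0) ↔ b ∈ β) := by
    intro b hb
    simp only [Finset.mem_filter, hb]
    exact ⟨fun h => h.1, fun h => ⟨h, hr⟩⟩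
  constructor
  · rintro ⟨v, h1, h0, hs⟩
    refine ⟨fun j => v ⟨j.val, (hmem j.val j.prop.2).mpr j.prop.1, j.prop.2⟩, ?_, ?_, ?_⟩
    · intro b0; exact h1 _
    · intro b0 b1 hne hcond
      refine h0 _ b1 hne ?_
      rintro ⟨hlt, hnot⟩
      exact hcond ⟨hlt, fun hb => hnot ((hmem b1.val b1.prop).mpr hb)⟩
    · rw [hs]
      congr 1
      ext x
      constructor
      · rintro ⟨j, rfl⟩
        exact ⟨⟨j.val, (hmem j.val j.prop.2).mp j.prop.1, j.prop.2⟩, rfl⟩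
      · rintro ⟨j, rfl⟩
        exact ⟨⟨j.val, (hmem j.val j.prop.2).mpr j.prop.1, j.prop.2⟩, rfl⟩
  · rintro ⟨v, h1, h0, hs⟩
    refine ⟨fun j => v ⟨j.val, (hmem j.val j.prop.2).mp j.prop.1, j.prop.2⟩, ?_, ?_, ?_⟩
    · intro b0; exact h1 _
    · intro b0 b1 hne hcond
      refine h0 _ b1 hne ?_
      rintro ⟨hlt, hnot⟩
      exact hcond ⟨hlt, fun hb => hnot ((hmem b1.val b1.prop).mp hb)⟩
    · rw [hs]
      congr 1
      ext x
      constructor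
      · rintro ⟨j, rfl⟩
        exact ⟨⟨j.val, (hmem j.val j.prop.2).mpr j.prop.1, j.prop.2⟩, rfl⟩
      · rintro ⟨j, rfl⟩
        exact ⟨⟨j.val, (hmem j.val j.prop.2).mp j.prop.1, j.prop.2⟩, rfl⟩

theorem filter_filter_card (R : Rep K V0 A B) (β : Finset B) (q0 r : V0) (hr : r ≠ q0) :
    ((β.filter fun b => R.vtx b ≠ q0).filter fun b => R.vtx b = r).card
      = (β.filter fun b => R.vtx b = r).card := by
  congr 1
  ext b
  simp only [Finset.mem_filter]
  constructor
  · rintro ⟨⟨h1, -⟩, h2⟩; exact ⟨h1, h2⟩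
  · rintro ⟨h1, h2⟩; exact ⟨⟨h1, ne_of_eq_of_ne h2 hr⟩, h2⟩

end Ech

section Core

variable {K V0 A B : Type} [Field K] [Fintype V0] [Fintype A] [Fintype B] [LinearOrder B]
variable (R : Rep K V0 A B) (α0 : A) (β : Finset B)

/-- basis elements at the target vertex -/
abbrev Iq : Type := {b : B // R.vtx b = R.tgt α0}
/-- basis elements at the source vertex -/
abbrev Ip : Type := {b : B // R.vtx b = R.src α0}
/-- pivots at the target vertex -/
abbrev Jq : Type := {b : B // b ∈ β ∧ R.vtx b = R.tgt α0}
/-- pivots at the source vertex -/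
abbrev Jp : Type := {b : B // b ∈ β ∧ R.vtx b = R.src α0}

def rq (j : Jq R α0 β) : Iq R α0 := ⟨j.val, j.prop.2⟩
def rp (j : Jp R α0 β) : Ip R α0 := ⟨j.val, j.prop.2⟩

/-- The parameter index type. -/
def SType : Type :=
  Σ j : {b : B // b ∈ β.filter
      (fun b => R.vtx b = R.tgt α0 ∧ ¬ ∃ b0 ∈ β, R.MapsBasisTo α0 b0 b)},
    {b' : B // b' ∈ Finset.univ.filter
      (fun b' : B => R.vtx b' = R.tgt α0 ∧ b' < j.val ∧ b' ∉ β)}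

instance : Fintype (SType R α0 β) := by unfold SType; infer_instance

theorem card_SType : Fintype.card (SType R α0 β) =
    ∑ b ∈ β.filter
        (fun b => R.vtx b = R.tgt α0 ∧ ¬ ∃ b0 ∈ β, R.MapsBasisTo α0 b0 b),
      (Finset.univ.filter
        (fun b' : B => R.vtx b' = R.tgt α0 ∧ b' < b ∧ b' ∉ β)).card := by
  rw [show Fintype.card (SType R α0 β) = _ from Fintype.card_sigma]
  rw [← Finset.sum_coe_sort (β.filter
      (fun b => R.vtx b = R.tgt α0 ∧ ¬ ∃ b0 ∈ β, R.MapsBasisTo α0 b0 b))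
      (fun b => (Finset.univ.filter
        (fun b' : B => R.vtx b' = R.tgt α0 ∧ b' < b ∧ b' ∉ β)).card)]
  exact Finset.sum_congr rfl fun j _ => Fintype.card_coe _

theorem card_Jq : Fintype.card (Jq R α0 β)
    = (β.filter fun b => R.vtx b = R.tgt α0).card := by
  rw [Fintype.card_subtype]
  congr 1
  ext b
  simp [Finset.mem_filter]

variable (e : {b : B // R.vtx b = R.src α0} ≃o {b : B // R.vtx b = R.tgt α0})

theorem pi_single_instirrel {ι M : Type} {z : ∀ _ : ι, Zero M} {d1 d2 : DecidableEq ι}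
    (i : ι) (x : M) :
    @Pi.single ι (fun _ => M) z d1 i x = @Pi.single ι (fun _ => M) z d2 i x := by
  cases Subsingleton.elim d1 d2
  rfl

theorem mapped_eq (he : ∀ i, R.mmap α0 (Pi.single i 1) = Pi.single (e i) 1)
    {b0 b1 : B} (h0 : R.vtx b0 = R.src α0) (h1 : R.vtx b1 = R.tgt α0)
    (hm : R.MapsBasisTo α0 b0 b1) :
    e ⟨b0, h0⟩ = ⟨b1, h1⟩ := by
  obtain ⟨h0', h1', heq0⟩ := hm
  have heq : R.mmap α0 (Pi.single ⟨b0, h0⟩ 1) = Pi.single (⟨b1, h1⟩ : Iq R α0) 1 :=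
    (congrArg (R.mmap α0) (pi_single_instirrel _ _)).trans
      (heq0.trans (pi_single_instirrel _ _))
  have h3 : (Pi.single (e ⟨b0, h0⟩) 1 : Iq R α0 → K) = Pi.single ⟨b1, h1⟩ 1 :=
    (he ⟨b0, h0⟩).symm.trans
      ((congrArg (R.mmap α0) (pi_single_instirrel _ _)).trans
        (heq.trans (pi_single_instirrel _ _)))
  have h2 := congrFun h3 (e ⟨b0, h0⟩)
  rw [Pi.single_eq_same] at h2
  by_contra hne
  rw [Pi.single_eq_of_ne hne] at h2
  exact one_ne_zero h2

theorem mapsBasisTo_iff (he : ∀ i, R.mmap α0 (Pi.single i 1) = Pi.single (e i) 1)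
    (b1 : B) (h1 : R.vtx b1 = R.tgt α0) :
    (∃ b0 ∈ β, R.MapsBasisTo α0 b0 b1) ↔ (e.symm ⟨b1, h1⟩).val ∈ β := by
  constructor
  · rintro ⟨b0, hb0, hm⟩
    obtain ⟨h0, h1', -⟩ := id hm
    have h4 := mapped_eq R α0 e he h0 h1' hm
    have h5 : e.symm ⟨b1, h1⟩ = ⟨b0, h0⟩ := by
      rw [show (⟨b1, h1⟩ : Iq R α0) = e ⟨b0, h0⟩ from h4.symm]
      exact e.symm_apply_apply _
    rw [h5]
    exact hb0
  · intro hmem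
    refine ⟨(e.symm ⟨b1, h1⟩).val, hmem, (e.symm ⟨b1, h1⟩).prop, h1, ?_⟩
    have h6 : R.mmap α0 (Pi.single (e.symm ⟨b1, h1⟩) 1) = Pi.single (⟨b1, h1⟩ : Iq R α0) 1 := by
      rw [he (e.symm ⟨b1, h1⟩), e.apply_symm_apply]
    exact (congrArg (R.mmap α0) (pi_single_instirrel _ _)).trans
      (h6.trans (pi_single_instirrel _ _))

def EJval (j0 : Jp R α0 β) : Iq R α0 := e (rp R α0 β j0)

theorem EJmem (he : ∀ i, R.mmap α0 (Pi.single i 1) = Pi.single (e i) 1)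
    (himg : ∀ b0 ∈ β, R.vtx b0 = R.src α0 → ∃ b1 ∈ β, R.MapsBasisTo α0 b0 b1)
    (j0 : Jp R α0 β) : (EJval R α0 β e j0).val ∈ β := by
  obtain ⟨b1, hb1, hm⟩ := himg j0.val j0.prop.1 j0.prop.2
  obtain ⟨h0, h1, -⟩ := id hm
  have h2 : e ⟨j0.val, h0⟩ = ⟨b1, h1⟩ := mapped_eq R α0 e he h0 h1 hm
  have : EJval R α0 β e j0 = ⟨b1, h1⟩ := h2
  rw [this]
  exact hb1

def EJ (he : ∀ i, R.mmap α0 (Pi.single i 1) = Pi.single (e i) 1)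
    (himg : ∀ b0 ∈ β, R.vtx b0 = R.src α0 → ∃ b1 ∈ β, R.MapsBasisTo α0 b0 b1)
    (j0 : Jp R α0 β) : Jq R α0 β :=
  ⟨(EJval R α0 β e j0).val, EJmem R α0 β e he himg j0, (EJval R α0 β e j0).prop⟩

variable (lam : SType R α0 β → K) (u : Jp R α0 β → (Ip R α0 → K))

theorem nf_of_not_mem (he : ∀ i, R.mmap α0 (Pi.single i 1) = Pi.single (e i) 1)
    (j : Jq R α0 β) (h : (e.symm (rq R α0 β j)).val ∉ β) :
    ¬ ∃ b0 ∈ β, R.MapsBasisTo α0 b0 j.val :=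
  fun hex => h ((mapsBasisTo_iff R α0 β e he j.val j.prop.2).mp hex)

def freeRow (j : Jq R α0 β) (hj : ¬ ∃ b0 ∈ β, R.MapsBasisTo α0 b0 j.val) :
    Iq R α0 → K :=
  fun b1 => if b1.val = j.val then 1
    else if h : b1.val < j.val ∧ b1.val ∉ β then
      lam ⟨⟨j.val, by
          simp only [Finset.mem_filter]
          exact ⟨j.prop.1, j.prop.2, hj⟩⟩,
        ⟨b1.val, by
          simp only [Finset.mem_filter, Finset.mem_univ, true_and]
          exact ⟨b1.prop, h.1, h.2⟩⟩⟩
    else 0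

theorem freeRow_pivot (j : Jq R α0 β) (hj : ¬ ∃ b0 ∈ β, R.MapsBasisTo α0 b0 j.val) :
    freeRow R α0 β lam j hj ⟨j.val, j.prop.2⟩ = 1 := by
  unfold freeRow
  rw [if_pos rfl]

theorem freeRow_zero (j : Jq R α0 β) (hj : ¬ ∃ b0 ∈ β, R.MapsBasisTo α0 b0 j.val)
    (b1 : Iq R α0) (hne : b1.val ≠ j.val)
    (hcond : ¬ (b1.val < j.val ∧ b1.val ∉ β)) :
    freeRow R α0 β lam j hj b1 = 0 := by
  unfold freeRow
  rw [if_neg hne, dif_neg hcond]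

def imgRow (he : ∀ i, R.mmap α0 (Pi.single i 1) = Pi.single (e i) 1)
    (j0 : Jp R α0 β) : Iq R α0 → K :=
  (fun b1 => u j0 (e.symm b1)) -
  ∑ j' : Jq R α0 β, if h : (e.symm (rq R α0 β j')).val ∉ β then
      (u j0 (e.symm (rq R α0 β j'))) •
        freeRow R α0 β lam j' (nf_of_not_mem R α0 β e he j' h)
    else 0

def toJp (j : Jq R α0 β) (hj : (e.symm (rq R α0 β j)).val ∈ β) : Jp R α0 β :=
  ⟨(e.symm (rq R α0 β j)).val, hj, (e.symm (rq R α0 β j)).prop⟩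

def vRow (he : ∀ i, R.mmap α0 (Pi.single i 1) = Pi.single (e i) 1)
    (j : Jq R α0 β) : Iq R α0 → K :=
  if hj : (e.symm (rq R α0 β j)).val ∈ β then
    imgRow R α0 β e lam u he (toJp R α0 β e j hj)
  else freeRow R α0 β lam j (nf_of_not_mem R α0 β e he j hj)

theorem imgRow_pivot (he : ∀ i, R.mmap α0 (Pi.single i 1) = Pi.single (e i) 1)
    (himg : ∀ b0 ∈ β, R.vtx b0 = R.src α0 → ∃ b1 ∈ β, R.MapsBasisTo α0 b0 b1)
    (hu1 : ∀ j0 : Jp R α0 β, u j0 ⟨j0.val, j0.prop.2⟩ = 1)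
    (j0 : Jp R α0 β) :
    imgRow R α0 β e lam u he j0 (EJval R α0 β e j0) = 1 := by
  unfold imgRow
  rw [Pi.sub_apply, Finset.sum_apply]
  have hsymm : e.symm (EJval R α0 β e j0) = rp R α0 β j0 := e.symm_apply_apply _
  have hsum : (∑ j' : Jq R α0 β, (if h : (e.symm (rq R α0 β j')).val ∉ β then
      (u j0 (e.symm (rq R α0 β j'))) •
        freeRow R α0 β lam j' (nf_of_not_mem R α0 β e he j' h)
    else 0) (EJval R α0 β e j0)) = 0 := by
    refine Finset.sum_eq_zero fun j' _ => ?_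
    by_cases h : (e.symm (rq R α0 β j')).val ∉ β
    · rw [dif_pos h, Pi.smul_apply]
      have hne1 : (EJval R α0 β e j0).val ≠ j'.val := by
        intro hvv
        apply h
        have h8 : rq R α0 β j' = EJval R α0 β e j0 := Subtype.ext hvv.symm
        rw [h8, hsymm]
        exact j0.prop.1
      have hne2 : ¬ ((EJval R α0 β e j0).val < j'.val ∧ (EJval R α0 β e j0).val ∉ β) := by
        rintro ⟨-, hnot⟩
        exact hnot (EJmem R α0 β e he himg j0)
      rw [freeRow_zero R α0 β lam j' _ _ hne1 hne2, smul_zero]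
    · rw [dif_neg h]
      rfl
  rw [hsum, hsymm, sub_zero]
  exact hu1 j0

theorem imgRow_zero (he : ∀ i, R.mmap α0 (Pi.single i 1) = Pi.single (e i) 1)
    (hu0 : ∀ (j0 : Jp R α0 β) (x : Ip R α0),
      x.val ≠ j0.val → ¬ (x.val < j0.val ∧ x.val ∉ β) → u j0 x = 0)
    (j0 : Jp R α0 β) (b1 : Iq R α0)
    (hne : b1.val ≠ (EJval R α0 β e j0).val)
    (hcond : ¬ (b1.val < (EJval R α0 β e j0).val ∧ b1.val ∉ β)) :
    imgRow R α0 β e lam u he j0 b1 = 0 := by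
  unfold imgRow
  rw [Pi.sub_apply, Finset.sum_apply]
  have hxne : (e.symm b1).val ≠ j0.val := by
    intro hvv
    apply hne
    have h8 : e.symm b1 = rp R α0 β j0 := Subtype.ext hvv
    have h9 : b1 = EJval R α0 β e j0 := by
      rw [show b1 = e (e.symm b1) from (e.apply_symm_apply b1).symm, h8]; rfl
    rw [h9]
  by_cases hb : b1.val ∈ β
  · -- b1 is a pivot position
    have hj1 : b1.val ∈ β ∧ R.vtx b1.val = R.tgt α0 := ⟨hb, b1.prop⟩
    set j1 : Jq R α0 β := ⟨b1.val, hj1⟩ with hj1def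
    by_cases hP : (e.symm b1).val ∈ β
    · have h1 : u j0 (e.symm b1) = 0 := by
        refine hu0 j0 (e.symm b1) hxne ?_
        rintro ⟨-, hnot⟩
        exact hnot hP
      have hsum : (∑ j' : Jq R α0 β, (if h : (e.symm (rq R α0 β j')).val ∉ β then
          (u j0 (e.symm (rq R α0 β j'))) •
            freeRow R α0 β lam j' (nf_of_not_mem R α0 β e he j' h)
        else 0) b1) = 0 := by
        refine Finset.sum_eq_zero fun j' _ => ?_
        by_cases h : (e.symm (rq R α0 β j')).val ∉ β
        · rw [dif_pos h, Pi.smul_apply]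
          have hne1 : b1.val ≠ j'.val := by
            intro hvv
            apply h
            have h8 : rq R α0 β j' = b1 := Subtype.ext hvv.symm
            rw [h8]
            exact hP
          have hne2 : ¬ (b1.val < j'.val ∧ b1.val ∉ β) := by
            rintro ⟨-, hnot⟩; exact hnot hb
          rw [freeRow_zero R α0 β lam j' _ _ hne1 hne2, smul_zero]
        · rw [dif_neg h]; rfl
      rw [h1, hsum, sub_zero]
    · -- b1 is a free pivot: single surviving term cancels the head
      have hsum : (∑ j' : Jq R α0 β, (if h : (e.symm (rq R α0 β j')).val ∉ β then
          (u j0 (e.symm (rq R α0 β j'))) •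
            freeRow R α0 β lam j' (nf_of_not_mem R α0 β e he j' h)
        else 0) b1) = u j0 (e.symm b1) := by
        have hP' : (e.symm (rq R α0 β j1)).val ∉ β := hP
        rw [Finset.sum_eq_single j1]
        · rw [dif_pos hP', Pi.smul_apply]
          have hpiv : freeRow R α0 β lam j1
              (nf_of_not_mem R α0 β e he j1 hP') b1 = 1 := by
            unfold freeRow
            rw [if_pos rfl]
          rw [hpiv, smul_eq_mul, mul_one]
          rfl
        · intro j' _ hj'
          by_cases h : (e.symm (rq R α0 β j')).val ∉ β
          · rw [dif_pos h, Pi.smul_apply]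
            have hne1 : b1.val ≠ j'.val := by
              intro hvv
              exact hj' (Subtype.ext hvv.symm)
            have hne2 : ¬ (b1.val < j'.val ∧ b1.val ∉ β) := by
              rintro ⟨-, hnot⟩; exact hnot hb
            rw [freeRow_zero R α0 β lam j' _ _ hne1 hne2, smul_zero]
          · rw [dif_neg h]; rfl
        · intro h; exact absurd (Finset.mem_univ j1) h
      rw [hsum, sub_self]
  · -- b1 is not a pivot position; then b1 > EJval j0
    have hgt : (EJval R α0 β e j0).val < b1.val := by
      refine (lt_or_gt_of_ne hne).resolve_left fun hlt => hcond ⟨hlt, hb⟩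
    have h1 : u j0 (e.symm b1) = 0 := by
      refine hu0 j0 (e.symm b1) hxne ?_
      rintro ⟨hlt, -⟩
      have : rp R α0 β j0 < e.symm b1 := by
        rw [show rp R α0 β j0 = e.symm (EJval R α0 β e j0) from
          (e.symm_apply_apply _).symm]
        exact e.symm.lt_iff_lt.mpr (Subtype.mk_lt_mk.mpr hgt)
      exact absurd hlt (not_lt_of_gt (Subtype.mk_lt_mk.mp this))
    have hsum : (∑ j' : Jq R α0 β, (if h : (e.symm (rq R α0 β j')).val ∉ β then
        (u j0 (e.symm (rq R α0 β j'))) •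
          freeRow R α0 β lam j' (nf_of_not_mem R α0 β e he j' h)
      else 0) b1) = 0 := by
      refine Finset.sum_eq_zero fun j' _ => ?_
      by_cases h : (e.symm (rq R α0 β j')).val ∉ β
      · rw [dif_pos h, Pi.smul_apply]
        by_cases h2 : b1.val < j'.val ∧ b1.val ∉ β
        · have hc0 : u j0 (e.symm (rq R α0 β j')) = 0 := by
            refine hu0 j0 (e.symm (rq R α0 β j')) ?_ ?_
            · intro hvv
              have h8 : e.symm (rq R α0 β j') = rp R α0 β j0 := Subtype.ext hvv
              have h9 : rq R α0 β j' = EJval R α0 β e j0 := by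
                rw [show rq R α0 β j' = e (e.symm (rq R α0 β j')) from
                  (e.apply_symm_apply _).symm, h8]
                rfl
              have : b1.val < (EJval R α0 β e j0).val := by
                rw [← h9]; exact h2.1
              exact absurd this (not_lt_of_gt hgt)
            · rintro ⟨hlt, -⟩
              have hgt2 : (EJval R α0 β e j0).val < j'.val := lt_trans hgt h2.1
              have : rp R α0 β j0 < e.symm (rq R α0 β j') := by
                rw [show rp R α0 β j0 = e.symm (EJval R α0 β e j0) from
                  (e.symm_apply_apply _).symm]
                exact e.symm.lt_iff_lt.mpr (Subtype.mk_lt_mk.mpr hgt2)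
              exact absurd hlt (not_lt_of_gt (Subtype.mk_lt_mk.mp this))
          rw [hc0, zero_smul]
        · have hne1 : b1.val ≠ j'.val := by
            intro hvv
            exact hb (hvv ▸ j'.prop.1)
          rw [freeRow_zero R α0 β lam j' _ _ hne1 h2, smul_zero]
      · rw [dif_neg h]; rfl
    rw [h1, hsum, sub_zero]

theorem rq_EJ (he : ∀ i, R.mmap α0 (Pi.single i 1) = Pi.single (e i) 1)
    (himg : ∀ b0 ∈ β, R.vtx b0 = R.src α0 → ∃ b1 ∈ β, R.MapsBasisTo α0 b0 b1)
    (j0 : Jp R α0 β) :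
    rq R α0 β (EJ R α0 β e he himg j0) = EJval R α0 β e j0 := rfl

theorem EJ_P (he : ∀ i, R.mmap α0 (Pi.single i 1) = Pi.single (e i) 1)
    (himg : ∀ b0 ∈ β, R.vtx b0 = R.src α0 → ∃ b1 ∈ β, R.MapsBasisTo α0 b0 b1)
    (j0 : Jp R α0 β) :
    (e.symm (rq R α0 β (EJ R α0 β e he himg j0))).val ∈ β := by
  rw [rq_EJ]
  have : e.symm (EJval R α0 β e j0) = rp R α0 β j0 := e.symm_apply_apply _
  rw [this]
  exact j0.prop.1

theorem toJp_EJ (he : ∀ i, R.mmap α0 (Pi.single i 1) = Pi.single (e i) 1)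
    (himg : ∀ b0 ∈ β, R.vtx b0 = R.src α0 → ∃ b1 ∈ β, R.MapsBasisTo α0 b0 b1)
    (j0 : Jp R α0 β) (h : (e.symm (rq R α0 β (EJ R α0 β e he himg j0))).val ∈ β) :
    toJp R α0 β e (EJ R α0 β e he himg j0) h = j0 := by
  apply Subtype.ext
  show (e.symm (rq R α0 β (EJ R α0 β e he himg j0))).val = j0.val
  rw [rq_EJ]
  have : e.symm (EJval R α0 β e j0) = rp R α0 β j0 := e.symm_apply_apply _
  rw [this]
  rfl

theorem decomp (he : ∀ i, R.mmap α0 (Pi.single i 1) = Pi.single (e i) 1)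
    (himg : ∀ b0 ∈ β, R.vtx b0 = R.src α0 → ∃ b1 ∈ β, R.MapsBasisTo α0 b0 b1)
    (j0 : Jp R α0 β) :
    (fun b1 : Iq R α0 => u j0 (e.symm b1)) =
      vRow R α0 β e lam u he (EJ R α0 β e he himg j0) +
      ∑ j' : Jq R α0 β, (if h : (e.symm (rq R α0 β j')).val ∉ β then
        (u j0 (e.symm (rq R α0 β j'))) •
          freeRow R α0 β lam j' (nf_of_not_mem R α0 β e he j' h)
      else 0) := by
  rw [vRow, dif_pos (EJ_P R α0 β e he himg j0), toJp_EJ R α0 β e he himg j0, imgRow]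
  rw [sub_add_cancel]

theorem vRow_pivot (he : ∀ i, R.mmap α0 (Pi.single i 1) = Pi.single (e i) 1)
    (himg : ∀ b0 ∈ β, R.vtx b0 = R.src α0 → ∃ b1 ∈ β, R.MapsBasisTo α0 b0 b1)
    (hu1 : ∀ j0 : Jp R α0 β, u j0 ⟨j0.val, j0.prop.2⟩ = 1)
    (j : Jq R α0 β) :
    vRow R α0 β e lam u he j ⟨j.val, j.prop.2⟩ = 1 := by
  unfold vRow
  by_cases hj : (e.symm (rq R α0 β j)).val ∈ β
  · rw [dif_pos hj]
    have hEv : EJval R α0 β e (toJp R α0 β e j hj) = rq R α0 β j := by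
      show e (rp R α0 β (toJp R α0 β e j hj)) = rq R α0 β j
      have : rp R α0 β (toJp R α0 β e j hj) = e.symm (rq R α0 β j) := rfl
      rw [this]
      exact e.apply_symm_apply _
    have := imgRow_pivot R α0 β e lam u he himg hu1 (toJp R α0 β e j hj)
    rw [hEv] at this
    exact this
  · rw [dif_neg hj]
    exact freeRow_pivot R α0 β lam j _

theorem vRow_zero (he : ∀ i, R.mmap α0 (Pi.single i 1) = Pi.single (e i) 1)
    (hu0 : ∀ (j0 : Jp R α0 β) (x : Ip R α0),
      x.val ≠ j0.val → ¬ (x.val < j0.val ∧ x.val ∉ β) → u j0 x = 0)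
    (j : Jq R α0 β) (b1 : Iq R α0) (hne : b1.val ≠ j.val)
    (hcond : ¬ (b1.val < j.val ∧ b1.val ∉ β)) :
    vRow R α0 β e lam u he j b1 = 0 := by
  unfold vRow
  by_cases hj : (e.symm (rq R α0 β j)).val ∈ β
  · rw [dif_pos hj]
    have hEv : EJval R α0 β e (toJp R α0 β e j hj) = rq R α0 β j := by
      show e (rp R α0 β (toJp R α0 β e j hj)) = rq R α0 β j
      have : rp R α0 β (toJp R α0 β e j hj) = e.symm (rq R α0 β j) := rfl
      rw [this]
      exact e.apply_symm_apply _
    refine imgRow_zero R α0 β e lam u he hu0 (toJp R α0 β e j hj) b1 ?_ ?_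
    · rw [hEv]; exact hne
    · rw [hEv]; exact hcond
  · rw [dif_neg hj]
    exact freeRow_zero R α0 β lam j _ b1 hne hcond

theorem vRow_pn (he : ∀ i, R.mmap α0 (Pi.single i 1) = Pi.single (e i) 1)
    (himg : ∀ b0 ∈ β, R.vtx b0 = R.src α0 → ∃ b1 ∈ β, R.MapsBasisTo α0 b0 b1)
    (hu1 : ∀ j0 : Jp R α0 β, u j0 ⟨j0.val, j0.prop.2⟩ = 1)
    (hu0 : ∀ (j0 : Jp R α0 β) (x : Ip R α0),
      x.val ≠ j0.val → ¬ (x.val < j0.val ∧ x.val ∉ β) → u j0 x = 0) :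
    PivNorm (fun j : Jq R α0 β => (⟨j.val, j.prop.2⟩ : Iq R α0))
      (vRow R α0 β e lam u he) :=
  ech_pivnorm (vRow_pivot R α0 β e lam u he himg hu1)
    (vRow_zero R α0 β e lam u he hu0)

theorem lmap_mem (he : ∀ i, R.mmap α0 (Pi.single i 1) = Pi.single (e i) 1)
    (himg : ∀ b0 ∈ β, R.vtx b0 = R.src α0 → ∃ b1 ∈ β, R.MapsBasisTo α0 b0 b1)
    (j0 : Jp R α0 β) :
    (fun b1 : Iq R α0 => u j0 (e.symm b1)) ∈
      Submodule.span K (Set.range (vRow R α0 β e lam u he)) := by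
  rw [decomp R α0 β e lam u he himg j0]
  refine Submodule.add_mem _ (Submodule.subset_span ⟨_, rfl⟩)
    (Submodule.sum_mem _ fun j' _ => ?_)
  by_cases h : (e.symm (rq R α0 β j')).val ∉ β
  · rw [dif_pos h]
    refine Submodule.smul_mem _ _ (Submodule.subset_span ⟨j', ?_⟩)
    rw [vRow, dif_neg h]
  · rw [dif_neg h]
    exact Submodule.zero_mem _

theorem maps_span (he : ∀ i, R.mmap α0 (Pi.single i 1) = Pi.single (e i) 1)
    (himg : ∀ b0 ∈ β, R.vtx b0 = R.src α0 → ∃ b1 ∈ β, R.MapsBasisTo α0 b0 b1)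
    {x : Ip R α0 → K} (hx : x ∈ Submodule.span K (Set.range u)) :
    (LinearMap.funLeft K K (fun c : Iq R α0 => e.symm c)) x ∈
      Submodule.span K (Set.range (vRow R α0 β e lam u he)) := by
  have hle : Submodule.map (LinearMap.funLeft K K fun c : Iq R α0 => e.symm c)
      (Submodule.span K (Set.range u)) ≤
      Submodule.span K (Set.range (vRow R α0 β e lam u he)) := by
    rw [Submodule.map_span, Submodule.span_le]
    rintro y ⟨x', ⟨j0, rfl⟩, rfl⟩
    exact lmap_mem R α0 β e lam u he himg j0
  exact hle (Submodule.mem_map_of_mem hx)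

set_option maxHeartbeats 8000000 in
theorem vRow_finrank (he : ∀ i, R.mmap α0 (Pi.single i 1) = Pi.single (e i) 1)
    (himg : ∀ b0 ∈ β, R.vtx b0 = R.src α0 → ∃ b1 ∈ β, R.MapsBasisTo α0 b0 b1)
    (hu1 : ∀ j0 : Jp R α0 β, u j0 ⟨j0.val, j0.prop.2⟩ = 1)
    (hu0 : ∀ (j0 : Jp R α0 β) (x : Ip R α0),
      x.val ≠ j0.val → ¬ (x.val < j0.val ∧ x.val ∉ β) → u j0 x = 0) :
    Module.finrank K
        (Submodule.span K (Set.range (vRow R α0 β e lam u he)))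
      = (β.filter fun b => R.vtx b = R.tgt α0).card := by
  have h1 := finrank_span_eq_card
    (pivnorm_indep (vRow_pn R α0 β e lam u he himg hu1 hu0))
  rw [h1]
  exact card_Jq R α0 β

/-- Read off the free parameters from an echelon family. -/
def extract (v' : Jq R α0 β → (Iq R α0 → K)) : SType R α0 β → K := fun s =>
  v' ⟨s.1.val, (Finset.mem_filter.mp s.1.prop).1,
        ((Finset.mem_filter.mp s.1.prop).2).1⟩
     ⟨s.2.val, ((Finset.mem_filter.mp s.2.prop).2).1⟩

theorem extract_freeRow (he : ∀ i, R.mmap α0 (Pi.single i 1) = Pi.single (e i) 1)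
    (v' : Jq R α0 β → (Iq R α0 → K))
    (hv1 : ∀ b0, v' b0 ⟨b0.val, b0.prop.2⟩ = 1)
    (hv0 : ∀ b0 b1, b1.val ≠ b0.val → ¬(b1.val < b0.val ∧ b1.val ∉ β) → v' b0 b1 = 0)
    (j : Jq R α0 β) (hj : ¬ ∃ b0 ∈ β, R.MapsBasisTo α0 b0 j.val) :
    freeRow R α0 β (extract R α0 β v') j hj = v' j := by
  funext b1
  unfold freeRow
  by_cases h1 : b1.val = j.val
  · rw [if_pos h1]
    have hb : b1 = (⟨j.val, j.prop.2⟩ : Iq R α0) := Subtype.ext h1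
    rw [hb, hv1 j]
  · rw [if_neg h1]
    by_cases h2 : b1.val < j.val ∧ b1.val ∉ β
    · rw [dif_pos h2]
      rfl
    · rw [dif_neg h2]
      exact (hv0 j b1 h1 h2).symm

theorem EJval_toJp (j : Jq R α0 β) (hj : (e.symm (rq R α0 β j)).val ∈ β) :
    EJval R α0 β e (toJp R α0 β e j hj) = rq R α0 β j := by
  show e (rp R α0 β (toJp R α0 β e j hj)) = rq R α0 β j
  have : rp R α0 β (toJp R α0 β e j hj) = e.symm (rq R α0 β j) := rfl
  rw [this]
  exact e.apply_symm_apply _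

theorem extract_imgRow (he : ∀ i, R.mmap α0 (Pi.single i 1) = Pi.single (e i) 1)
    (himg : ∀ b0 ∈ β, R.vtx b0 = R.src α0 → ∃ b1 ∈ β, R.MapsBasisTo α0 b0 b1)
    (hu1 : ∀ j0 : Jp R α0 β, u j0 ⟨j0.val, j0.prop.2⟩ = 1)
    (hu0 : ∀ (j0 : Jp R α0 β) (x : Ip R α0),
      x.val ≠ j0.val → ¬ (x.val < j0.val ∧ x.val ∉ β) → u j0 x = 0)
    (v' : Jq R α0 β → (Iq R α0 → K))
    (hv1 : ∀ b0, v' b0 ⟨b0.val, b0.prop.2⟩ = 1)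
    (hv0 : ∀ b0 b1, b1.val ≠ b0.val → ¬(b1.val < b0.val ∧ b1.val ∉ β) → v' b0 b1 = 0)
    (hmap : ∀ j0 : Jp R α0 β, (fun b1 : Iq R α0 => u j0 (e.symm b1)) ∈
      Submodule.span K (Set.range v'))
    (j : Jq R α0 β) (hj : (e.symm (rq R α0 β j)).val ∈ β) :
    imgRow R α0 β e (extract R α0 β v') u he (toJp R α0 β e j hj) = v' j := by
  have hEv := EJval_toJp R α0 β e j hj
  have hmem : imgRow R α0 β e (extract R α0 β v') u he (toJp R α0 β e j hj) ∈
      Submodule.span K (Set.range v') := by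
    rw [imgRow]
    refine Submodule.sub_mem _ (hmap _) (Submodule.sum_mem _ fun j' _ => ?_)
    by_cases h : (e.symm (rq R α0 β j')).val ∉ β
    · rw [dif_pos h, extract_freeRow R α0 β e he v' hv1 hv0 j' _]
      exact Submodule.smul_mem _ _ (Submodule.subset_span ⟨j', rfl⟩)
    · rw [dif_neg h]; exact Submodule.zero_mem _
  have hvj : v' j ∈ Submodule.span K (Set.range v') :=
    Submodule.subset_span ⟨j, rfl⟩
  have hpn : PivNorm (fun b0 : Jq R α0 β => (⟨b0.val, b0.prop.2⟩ : Iq R α0)) v' :=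
    ech_pivnorm hv1 hv0
  have hd : imgRow R α0 β e (extract R α0 β v') u he (toJp R α0 β e j hj) - v' j = 0 := by
    refine pivnorm_eq_zero hpn (Submodule.sub_mem _ hmem hvj) ?_
    intro j''
    rw [Pi.sub_apply]
    by_cases hji : j'' = j
    · subst hji
      have h1 : imgRow R α0 β e (extract R α0 β v') u he (toJp R α0 β e j'' hj)
          (⟨j''.val, j''.prop.2⟩ : Iq R α0) = 1 := by
        have := imgRow_pivot R α0 β e (extract R α0 β v') u he himg hu1
          (toJp R α0 β e j'' hj)
        rwa [hEv] at this
      rw [h1, hv1 j'', sub_self]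
    · have hnev : (⟨j''.val, j''.prop.2⟩ : Iq R α0).val ≠ j.val :=
        fun h => hji (Subtype.ext h)
      have hcondv : ¬ ((⟨j''.val, j''.prop.2⟩ : Iq R α0).val < j.val ∧
          (⟨j''.val, j''.prop.2⟩ : Iq R α0).val ∉ β) := by
        rintro ⟨-, hnot⟩; exact hnot j''.prop.1
      have h1 : imgRow R α0 β e (extract R α0 β v') u he (toJp R α0 β e j hj)
          (⟨j''.val, j''.prop.2⟩ : Iq R α0) = 0 := by
        refine imgRow_zero R α0 β e (extract R α0 β v') u he hu0 _ _ ?_ ?_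
        · rw [hEv]; exact hnev
        · rw [hEv]; exact hcondv
      rw [h1, hv0 j _ hnev hcondv, sub_self]
  exact sub_eq_zero.mp hd

theorem vRow_extract (he : ∀ i, R.mmap α0 (Pi.single i 1) = Pi.single (e i) 1)
    (himg : ∀ b0 ∈ β, R.vtx b0 = R.src α0 → ∃ b1 ∈ β, R.MapsBasisTo α0 b0 b1)
    (hu1 : ∀ j0 : Jp R α0 β, u j0 ⟨j0.val, j0.prop.2⟩ = 1)
    (hu0 : ∀ (j0 : Jp R α0 β) (x : Ip R α0),
      x.val ≠ j0.val → ¬ (x.val < j0.val ∧ x.val ∉ β) → u j0 x = 0)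
    (v' : Jq R α0 β → (Iq R α0 → K))
    (hv1 : ∀ b0, v' b0 ⟨b0.val, b0.prop.2⟩ = 1)
    (hv0 : ∀ b0 b1, b1.val ≠ b0.val → ¬(b1.val < b0.val ∧ b1.val ∉ β) → v' b0 b1 = 0)
    (hmap : ∀ j0 : Jp R α0 β, (fun b1 : Iq R α0 => u j0 (e.symm b1)) ∈
      Submodule.span K (Set.range v')) :
    vRow R α0 β e (extract R α0 β v') u he = v' := by
  funext j
  rw [vRow]
  by_cases hj : (e.symm (rq R α0 β j)).val ∈ β
  · rw [dif_pos hj]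
    exact extract_imgRow R α0 β e u he himg hu1 hu0 v' hv1 hv0 hmap j hj
  · rw [dif_neg hj]
    exact extract_freeRow R α0 β e he v' hv1 hv0 j _

theorem extract_vRow (he : ∀ i, R.mmap α0 (Pi.single i 1) = Pi.single (e i) 1)
    (lam : SType R α0 β → K) :
    extract R α0 β (vRow R α0 β e lam u he) = lam := by
  funext s
  obtain ⟨hmemβ, hvtx, hfree⟩ :
      s.1.val ∈ β ∧ R.vtx s.1.val = R.tgt α0 ∧
        ¬ ∃ b0 ∈ β, R.MapsBasisTo α0 b0 s.1.val := by
    have h := Finset.mem_filter.mp s.1.prop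
    exact ⟨h.1, h.2.1, h.2.2⟩
  obtain ⟨hvtx2, hlt, hnot⟩ :
      R.vtx s.2.val = R.tgt α0 ∧ s.2.val < s.1.val ∧ s.2.val ∉ β := by
    have h := Finset.mem_filter.mp s.2.prop
    exact ⟨h.2.1, h.2.2.1, h.2.2.2⟩
  show vRow R α0 β e lam u he _ _ = lam s
  have hP : ¬ (e.symm (rq R α0 β
      ⟨s.1.val, (Finset.mem_filter.mp s.1.prop).1,
        ((Finset.mem_filter.mp s.1.prop).2).1⟩)).val ∈ β :=
    fun hmem => hfree ((mapsBasisTo_iff R α0 β e he s.1.val hvtx).mpr hmem)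
  rw [vRow, dif_neg hP]
  unfold freeRow
  rw [if_neg (ne_of_lt hlt), dif_pos (⟨hlt, hnot⟩ :
    (⟨s.2.val, ((Finset.mem_filter.mp s.2.prop).2).1⟩ : Iq R α0).val <
      (⟨s.1.val, (Finset.mem_filter.mp s.1.prop).1,
        ((Finset.mem_filter.mp s.1.prop).2).1⟩ : Jq R α0 β).val ∧
      (⟨s.2.val, ((Finset.mem_filter.mp s.2.prop).2).1⟩ : Iq R α0).val ∉ β)]
  rfl

theorem mmap_funLeft (hlin : R.Linear)
    (he : ∀ i, R.mmap α0 (Pi.single i 1) = Pi.single (e i) 1) (x : Ip R α0 → K) :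
    R.mmap α0 x = (LinearMap.funLeft K K fun c : Iq R α0 => e.symm c) x := by
  have h : IsLinearMap.mk' _ (hlin α0) =
      LinearMap.funLeft K K (fun c : Iq R α0 => e.symm c) := by
    apply LinearMap.pi_ext
    intro i y
    show R.mmap α0 (Pi.single i y) = _
    have h1 : (Pi.single i y : Ip R α0 → K) = y • (Pi.single i 1 : Ip R α0 → K) := by
      funext c
      by_cases hc : c = i
      · subst hc; simp
      · simp [Pi.single_eq_of_ne hc]
    rw [h1, (hlin α0).map_smul, he]
    funext c
    rw [LinearMap.funLeft_apply, Pi.smul_apply]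
    by_cases hc : c = e i
    · subst hc
      simp
    · have hc2 : e.symm c ≠ i := fun h2 => hc (by rw [← h2, e.apply_symm_apply])
      simp [Pi.single_eq_of_ne hc, Pi.single_eq_of_ne hc2]
  show IsLinearMap.mk' _ (hlin α0) x = _
  rw [h]

theorem res_mem (hend : ∀ a : A, a ≠ α0 → R.src a ≠ R.tgt α0 ∧ R.tgt a ≠ R.tgt α0)
    (W : R.SubRep) (hW : W ∈ R.Cell β) :
    R.resOn {r : V0 | r ≠ R.tgt α0} W ∈
      R.CellOn {r : V0 | r ≠ R.tgt α0} {a : A | a ≠ α0}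
        (β.filter fun b => R.vtx b ≠ R.tgt α0) := by
  refine ⟨?_, ?_, ?_⟩
  · intro a _ h1 h2 x hx
    exact hW.1 a x hx
  · intro r
    rw [filter_filter_card R β (R.tgt α0) r.val r.prop]
    exact hW.2.1 r.val
  · intro r
    exact (ech_filter_iff R β (R.tgt α0) r.val r.prop (W r.val)).mpr (hW.2.2 r.val)

def extSub (W' : R.SubRepOn {r : V0 | r ≠ R.tgt α0})
    (Wq : Submodule K ({b : B // R.vtx b = R.tgt α0} → K)) : R.SubRep :=
  fun r => if hr : r = R.tgt α0 then hr ▸ Wq else W' ⟨r, hr⟩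

theorem extSub_q (W' : R.SubRepOn {r : V0 | r ≠ R.tgt α0})
    (Wq : Submodule K ({b : B // R.vtx b = R.tgt α0} → K)) :
    extSub R α0 W' Wq (R.tgt α0) = Wq := by
  unfold extSub
  rw [dif_pos rfl]

theorem extSub_ne (W' : R.SubRepOn {r : V0 | r ≠ R.tgt α0})
    (Wq : Submodule K ({b : B // R.vtx b = R.tgt α0} → K))
    (r : V0) (hr : r ≠ R.tgt α0) :
    extSub R α0 W' Wq r = W' ⟨r, hr⟩ := by
  unfold extSub
  rw [dif_neg hr]

theorem res_ext (W' : R.SubRepOn {r : V0 | r ≠ R.tgt α0})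
    (Wq : Submodule K ({b : B // R.vtx b = R.tgt α0} → K)) :
    R.resOn {r : V0 | r ≠ R.tgt α0} (extSub R α0 W' Wq) = W' := by
  funext p
  have h1 : R.resOn {r : V0 | r ≠ R.tgt α0} (extSub R α0 W' Wq) p
      = extSub R α0 W' Wq p.val := rfl
  rw [h1, extSub_ne R α0 W' Wq p.val p.prop]

theorem ext_mem (hloop : R.src α0 ≠ R.tgt α0)
    (hend : ∀ a : A, a ≠ α0 → R.src a ≠ R.tgt α0 ∧ R.tgt a ≠ R.tgt α0)
    (W' : R.SubRepOn {r : V0 | r ≠ R.tgt α0})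
    (hW' : W' ∈ R.CellOn {r : V0 | r ≠ R.tgt α0} {a : A | a ≠ α0}
      (β.filter fun b => R.vtx b ≠ R.tgt α0))
    (Wq : Submodule K ({b : B // R.vtx b = R.tgt α0} → K))
    (hq1 : ∀ x ∈ W' ⟨R.src α0, hloop⟩, R.mmap α0 x ∈ Wq)
    (hq2 : Module.finrank K Wq = (β.filter fun b => R.vtx b = R.tgt α0).card)
    (hq3 : Ech R β (R.tgt α0) Wq) :
    extSub R α0 W' Wq ∈ R.Cell β := by
  refine ⟨?_, ?_, ?_⟩
  · intro a x hx
    by_cases ha : a = α0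
    · subst ha
      rw [extSub_ne R a W' Wq (R.src a) hloop] at hx
      rw [extSub_q R a W' Wq]
      exact hq1 x hx
    · obtain ⟨hs, ht⟩ := hend a ha
      rw [extSub_ne R α0 W' Wq (R.src a) hs] at hx
      rw [extSub_ne R α0 W' Wq (R.tgt a) ht]
      exact hW'.1 a ha hs ht x hx
  · intro r
    by_cases hr : r = R.tgt α0
    · subst hr
      rw [extSub_q R α0 W' Wq]
      exact hq2
    · rw [extSub_ne R α0 W' Wq r hr, ← filter_filter_card R β (R.tgt α0) r hr]
      exact hW'.2.1 ⟨r, hr⟩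
  · intro r
    by_cases hr : r = R.tgt α0
    · subst hr
      rw [show extSub R α0 W' Wq (R.tgt α0) = Wq from extSub_q R α0 W' Wq]
      exact hq3
    · rw [show extSub R α0 W' Wq r = W' ⟨r, hr⟩ from extSub_ne R α0 W' Wq r hr]
      exact (ech_filter_iff R β (R.tgt α0) r hr _).mp (hW'.2.2 ⟨r, hr⟩)

end Core

end Rep
end QGr
open QGr in
/-- Let `α₀ : p → q` be an arrow of `T` such that `q` is incident to no other
arrow, and let `T'` be `T` with `q` and `α₀` removed.  If the ordered basis `B` puts all of
`B_q` at the end of `B` and the matrix of `M_{α₀}` is the identity, and if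
`M_{α₀}(β_p) ⊆ β_q`, then `C_β^M ≅ C_{β'}^{M'} × K^n` (first component the restriction
to `T'`) with `n = Σ_{b ∈ β_q ∖ M_{α₀}(β_p)} #{b' ∈ B_q : b' < b, b' ∉ β_q}`. -/
theorem schubert_cell_remove_sink
    {K V0 A B : Type} [Field K] [Fintype V0] [Fintype A] [Fintype B] [LinearOrder B]
    (R : Rep K V0 A B) (hlin : R.Linear)
    (α0 : A) (hloop : R.src α0 ≠ R.tgt α0)
    (hend : ∀ a : A, a ≠ α0 → R.src a ≠ R.tgt α0 ∧ R.tgt a ≠ R.tgt α0)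
    (hord : ∀ b b' : B, R.vtx b ≠ R.tgt α0 → R.vtx b' = R.tgt α0 → b < b')
    (hid : R.IsIdMat α0)
    (β : Finset B)
    (himg : ∀ b0 ∈ β, R.vtx b0 = R.src α0 → ∃ b1 ∈ β, R.MapsBasisTo α0 b0 b1) :
    ∃ e : ↥(R.Cell β) ≃
        ↥(R.CellOn {r : V0 | r ≠ R.tgt α0} {a : A | a ≠ α0}
            (β.filter fun b => R.vtx b ≠ R.tgt α0)) ×
        (Fin (∑ b ∈ β.filter
            (fun b => R.vtx b = R.tgt α0 ∧ ¬ ∃ b0 ∈ β, R.MapsBasisTo α0 b0 b),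
          (Finset.univ.filter
            (fun b' : B => R.vtx b' = R.tgt α0 ∧ b' < b ∧ b' ∉ β)).card) → K),
      ∀ W : ↥(R.Cell β),
        ((e W).1 : R.SubRepOn {r : V0 | r ≠ R.tgt α0}) =
          R.resOn {r : V0 | r ≠ R.tgt α0} W.val := by
  
  classical
  obtain ⟨e, he⟩ := hid
  let res : ↥(R.Cell β) →
      ↥(R.CellOn {r : V0 | r ≠ R.tgt α0} {a : A | a ≠ α0}
        (β.filter fun b => R.vtx b ≠ R.tgt α0)) :=
    fun W => ⟨R.resOn {r : V0 | r ≠ R.tgt α0} W.val,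
      Rep.res_mem R α0 β hend W.val W.prop⟩
  have key : ∀ W' : ↥(R.CellOn {r : V0 | r ≠ R.tgt α0} {a : A | a ≠ α0}
        (β.filter fun b => R.vtx b ≠ R.tgt α0)),
      Nonempty ({W : ↥(R.Cell β) // res W = W'} ≃ (Rep.SType R α0 β → K)) := by
    intro W'
    obtain ⟨u, hu1, hu0, huspan⟩ :=
      (Rep.ech_filter_iff R β (R.tgt α0) (R.src α0) hloop
        (W'.val ⟨R.src α0, hloop⟩)).mp (W'.prop.2.2 ⟨R.src α0, hloop⟩)
    let G : (Rep.SType R α0 β → K) → {W : ↥(R.Cell β) // res W = W'} := fun lam =>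
      ⟨⟨Rep.extSub R α0 W'.val
          (Submodule.span K (Set.range (Rep.vRow R α0 β e lam u he))),
        Rep.ext_mem R α0 β hloop hend W'.val W'.prop _
          (fun x hx => by
            rw [Rep.mmap_funLeft R α0 e hlin he]
            exact Rep.maps_span R α0 β e lam u he himg (by rwa [huspan] at hx))
          (Rep.vRow_finrank R α0 β e lam u he himg hu1 hu0)
          ⟨Rep.vRow R α0 β e lam u he,
            Rep.vRow_pivot R α0 β e lam u he himg hu1,
            Rep.vRow_zero R α0 β e lam u he hu0, rfl⟩⟩,
       Subtype.ext (Rep.res_ext R α0 W'.val _)⟩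
    have hbij : Function.Bijective G := by
      constructor
      · intro lam1 lam2 h
        have h2 : Rep.extSub R α0 W'.val
              (Submodule.span K (Set.range (Rep.vRow R α0 β e lam1 u he)))
            = Rep.extSub R α0 W'.val
              (Submodule.span K (Set.range (Rep.vRow R α0 β e lam2 u he))) :=
          congrArg (fun Wf => Wf.val.val) h
        have h3 := congrFun h2 (R.tgt α0)
        rw [Rep.extSub_q, Rep.extSub_q] at h3
        have h4 : Rep.vRow R α0 β e lam1 u he = Rep.vRow R α0 β e lam2 u he :=
          Rep.pivnorm_unique (Rep.vRow_pn R α0 β e lam1 u he himg hu1 hu0)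
            (Rep.vRow_pn R α0 β e lam2 u he himg hu1 hu0) h3
        calc lam1 = Rep.extract R α0 β (Rep.vRow R α0 β e lam1 u he) :=
              (Rep.extract_vRow R α0 β e u he lam1).symm
          _ = Rep.extract R α0 β (Rep.vRow R α0 β e lam2 u he) := by rw [h4]
          _ = lam2 := Rep.extract_vRow R α0 β e u he lam2
      · intro Wf
        obtain ⟨v', hv1, hv0, hvspan⟩ := Wf.val.prop.2.2 (R.tgt α0)
        have hWpWf : Wf.val.val (R.src α0) = W'.val ⟨R.src α0, hloop⟩ :=
          congrFun (congrArg Subtype.val Wf.prop) ⟨R.src α0, hloop⟩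
        have hmap : ∀ j0 : Rep.Jp R α0 β,
            (fun b1 : Rep.Iq R α0 => u j0 (e.symm b1)) ∈
              Submodule.span K (Set.range v') := by
          intro j0
          have hu_mem : u j0 ∈ Wf.val.val (R.src α0) := by
            rw [hWpWf, huspan]
            exact Submodule.subset_span ⟨j0, rfl⟩
          have h2 := Wf.val.prop.1 α0 (u j0) hu_mem
          rw [Rep.mmap_funLeft R α0 e hlin he, hvspan] at h2
          exact h2
        refine ⟨Rep.extract R α0 β v', ?_⟩
        apply Subtype.ext
        apply Subtype.ext
        show Rep.extSub R α0 W'.val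
            (Submodule.span K (Set.range
              (Rep.vRow R α0 β e (Rep.extract R α0 β v') u he))) = Wf.val.val
        rw [Rep.vRow_extract R α0 β e u he himg hu1 hu0 v' hv1 hv0 hmap]
        funext r
        by_cases hr : r = R.tgt α0
        · subst hr
          rw [Rep.extSub_q]
          exact hvspan.symm
        · rw [Rep.extSub_ne R α0 W'.val _ r hr]
          exact (congrFun (congrArg Subtype.val Wf.prop) ⟨r, hr⟩).symm
    exact ⟨(Equiv.ofBijective G hbij).symm⟩
  have key2 : ∀ W' : ↥(R.CellOn {r : V0 | r ≠ R.tgt α0} {a : A | a ≠ α0}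
        (β.filter fun b => R.vtx b ≠ R.tgt α0)),
      Nonempty ({W : ↥(R.Cell β) // res W = W'} ≃
        (Fin (∑ b ∈ β.filter
            (fun b => R.vtx b = R.tgt α0 ∧ ¬ ∃ b0 ∈ β, R.MapsBasisTo α0 b0 b),
          (Finset.univ.filter
            (fun b' : B => R.vtx b' = R.tgt α0 ∧ b' < b ∧ b' ∉ β)).card) → K)) :=
    fun W' => (key W').map fun φ => φ.trans
      (Equiv.arrowCongr
        (Fintype.equivFinOfCardEq (Rep.card_SType R α0 β)) (Equiv.refl K))
  exact ⟨(Equiv.sigmaFiberEquiv res).symm.trans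
      ((Equiv.sigmaCongrRight fun W' => (key2 W').some).trans
        (Equiv.sigmaEquivProd _ _)),
    fun W => rfl⟩
end
end

section
/- Let T be a quiver, α₀ : p → q an arrow of T such that the vertex p is incident to no arrow of T other than α₀, and let T' be the quiver obtained from T by removing p and α₀. Let M be a representation of T over a field K with ordered basis B such that every element of B ∖ B_p precedes every element of B_p and the matrix of M_{α₀} with respect to the ordered bases B_p and B_q is the identity matrix. Let M' be the restriction of M to T', β ⊆ B with M_{α₀}(β_p) ⊆ β_q, and β' = β ∖ β_p. Then there is a bijection C_β^M ≅ C_{β'}^{M'} × K^n whose first component is the restriction map V ↦ (V_r)_{r∈T'0}, where n = Σ_{b ∈ β_p} #{b' ∈ β_q : b' < M_{α₀}(b) and b' ∉ M_{α₀}(β_p)}. -/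
open scoped Classical

noncomputable section

namespace SchAux
open QGr QGr.Rep Submodule Set

section Red

variable {K ι P : Type} [Field K] [Fintype ι]

theorem red_coord (f : ι → P) (v : ι → P → K)
    (h1 : ∀ j, v j (f j) = 1) (h0 : ∀ j j', j' ≠ j → v j (f j') = 0)
    (c : ι → K) (j' : ι) : (∑ j, c j • v j) (f j') = c j' := by
  classical
  simp only [Finset.sum_apply, Pi.smul_apply, smul_eq_mul]
  rw [Finset.sum_eq_single j']
  · rw [h1, mul_one]
  · intro j _ hj
    rw [h0 j j' (fun h => hj (h ▸ rfl))]
    ring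
  · intro h; exact absurd (Finset.mem_univ j') h

theorem red_expand (f : ι → P) (v : ι → P → K)
    (h1 : ∀ j, v j (f j) = 1) (h0 : ∀ j j', j' ≠ j → v j (f j') = 0)
    {u : P → K} (hu : u ∈ Submodule.span K (Set.range v)) :
    ∑ j, u (f j) • v j = u := by
  obtain ⟨c, hc⟩ := (mem_span_range_iff_exists_fun K).mp hu
  have h : ∀ j', u (f j') = c j' := fun j' => by rw [← hc]; exact red_coord f v h1 h0 c j'
  calc ∑ j, u (f j) • v j = ∑ j, c j • v j := by simp_rw [h]
    _ = u := hc

theorem red_li (f : ι → P) (v : ι → P → K)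
    (h1 : ∀ j, v j (f j) = 1) (h0 : ∀ j j', j' ≠ j → v j (f j') = 0) :
    LinearIndependent K v := by
  rw [Fintype.linearIndependent_iff]
  intro c hc j
  have h := red_coord f v h1 h0 c j
  rw [hc] at h
  simpa using h.symm

theorem red_finrank (f : ι → P) (v : ι → P → K)
    (h1 : ∀ j, v j (f j) = 1) (h0 : ∀ j j', j' ≠ j → v j (f j') = 0) :
    Module.finrank K (Submodule.span K (Set.range v)) = Fintype.card ι :=
  finrank_span_eq_card (red_li f v h1 h0)

theorem red_unique (f : ι → P) (v v' : ι → P → K)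
    (h1 : ∀ j, v j (f j) = 1) (h0 : ∀ j j', j' ≠ j → v j (f j') = 0)
    (h1' : ∀ j, v' j (f j) = 1) (h0' : ∀ j j', j' ≠ j → v' j (f j') = 0)
    (hspan : Submodule.span K (Set.range v) = Submodule.span K (Set.range v')) :
    v = v' := by
  classical
  funext j0
  have hmem : v j0 ∈ Submodule.span K (Set.range v') := by
    rw [← hspan]; exact Submodule.subset_span ⟨j0, rfl⟩
  have h := red_expand f v' h1' h0' hmem
  rw [← h, Finset.sum_eq_single j0]
  · rw [h1 j0, one_smul]
  · intro j _ hj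
    rw [h0 j0 j hj, zero_smul]
  · intro h'; exact absurd (Finset.mem_univ j0) h'

theorem mmap_eq_aux {PP QQ : Type} [Fintype PP] [Fintype QQ] [DecidableEq PP] [DecidableEq QQ]
    (M : (PP → K) → (QQ → K)) (hM : IsLinearMap K M)
    (ee : PP ≃ QQ) (hee : ∀ i, M (Pi.single i 1) = Pi.single (ee i) 1) :
    ∀ x, M x = fun c => x (ee.symm c) := by
  have h : IsLinearMap.mk' M hM = LinearMap.funLeft K K (fun c => ee.symm c) := by
    apply (Pi.basisFun K PP).ext
    intro i
    simp only [Pi.basisFun_apply, IsLinearMap.mk'_apply, LinearMap.funLeft_apply]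
    rw [hee i]
    funext c
    simp only [LinearMap.funLeft_apply, Pi.single_apply]
    by_cases hc : c = ee i
    · simp [hc]
    · rw [if_neg hc, if_neg (by intro h'; exact hc (by rw [← h']; simp))]
  intro x
  have h3 := LinearMap.congr_fun h x
  funext c
  simpa using congrFun h3 c

theorem single_inj {ι : Type} [DecidableEq ι] (i j : ι)
    (h : Pi.single (M := fun _ => K) i 1 = Pi.single j 1) : i = j := by
  by_contra hne
  have h2 := congrFun h i
  rw [Pi.single_eq_same, Pi.single_eq_of_ne hne] at h2
  exact one_ne_zero (α := K) h2

end Red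

end SchAux

namespace SchAux
open QGr QGr.Rep Submodule Set

section Ctx

variable {K V0 A B : Type} [Field K] [Fintype V0] [Fintype A] [Fintype B] [LinearOrder B]
variable (R : Rep K V0 A B) (α0 : A) (β : Finset B)

/-- The index finset for the affine-space factor. -/
def fsI : Finset ((_ : B) × B) :=
  (β.filter fun b => R.vtx b = R.src α0).sigma
    (fun b => β.filter (fun b' => R.vtx b' = R.tgt α0 ∧
      (∃ b1 : B, R.MapsBasisTo α0 b b1 ∧ b' < b1) ∧
      ¬ ∃ b0 ∈ β, R.MapsBasisTo α0 b0 b'))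

variable (ee : {b : B // R.vtx b = R.src α0} ≃o {b : B // R.vtx b = R.tgt α0})

/-- total version of the bijection `B_p → B_q`. -/
def Ef (b : B) : B := if h : R.vtx b = R.src α0 then (ee ⟨b, h⟩).val else b

/-- total version of the bijection `B_q → B_p`. -/
def Eb (b : B) : B := if h : R.vtx b = R.tgt α0 then (ee.symm ⟨b, h⟩).val else b

variable {R α0}

omit [Fintype V0] [Fintype A] [Fintype B] in
/-- Bridge between different `DecidableEq` instances occurring in `Pi.single`. -/
lemma cast_single_eq {ι κ : Type} (M : (ι → K) → (κ → K)) {i1 i2 : DecidableEq ι}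
    {j1 j2 : DecidableEq κ} {i : ι} {j : κ}
    (h : M (@Pi.single _ (fun _ => K) _ i1 i 1) = @Pi.single _ (fun _ => K) _ j1 j 1) :
    M (@Pi.single _ (fun _ => K) _ i2 i 1) = @Pi.single _ (fun _ => K) _ j2 j 1 := by
  rwa [Subsingleton.elim i2 i1, Subsingleton.elim j2 j1]

lemma Ef_eq {b : B} (h : R.vtx b = R.src α0) : Ef R α0 ee b = (ee ⟨b, h⟩).val := dif_pos h

lemma Eb_eq {b : B} (h : R.vtx b = R.tgt α0) : Eb R α0 ee b = (ee.symm ⟨b, h⟩).val := dif_pos h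

lemma Ef_vtx {b : B} (h : R.vtx b = R.src α0) : R.vtx (Ef R α0 ee b) = R.tgt α0 := by
  rw [Ef_eq ee h]; exact (ee ⟨b, h⟩).prop

lemma Eb_vtx {b : B} (h : R.vtx b = R.tgt α0) : R.vtx (Eb R α0 ee b) = R.src α0 := by
  rw [Eb_eq ee h]; exact (ee.symm ⟨b, h⟩).prop

lemma Eb_Ef {b : B} (h : R.vtx b = R.src α0) : Eb R α0 ee (Ef R α0 ee b) = b := by
  rw [Eb_eq ee (Ef_vtx ee h)]
  have h2 : (⟨Ef R α0 ee b, Ef_vtx ee h⟩ : {b : B // R.vtx b = R.tgt α0}) = ee ⟨b, h⟩ :=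
    Subtype.ext (Ef_eq ee h)
  rw [h2, OrderIso.symm_apply_apply]

lemma Ef_Eb {b : B} (h : R.vtx b = R.tgt α0) : Ef R α0 ee (Eb R α0 ee b) = b := by
  rw [Ef_eq ee (Eb_vtx ee h)]
  have h2 : (⟨Eb R α0 ee b, Eb_vtx ee h⟩ : {b : B // R.vtx b = R.src α0}) = ee.symm ⟨b, h⟩ :=
    Subtype.ext (Eb_eq ee h)
  rw [h2, OrderIso.apply_symm_apply]

variable (hee : ∀ i, R.mmap α0 (Pi.single i 1) = Pi.single (ee i) 1)

include hee in
lemma mapsTo_iff {b0 : B} (h : R.vtx b0 = R.src α0) (b1 : B) :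
    R.MapsBasisTo α0 b0 b1 ↔ b1 = Ef R α0 ee b0 := by
  classical
  constructor
  · rintro ⟨h0, h1, heq⟩
    have heq' : R.mmap α0 (Pi.single ⟨b0, h0⟩ 1) =
        Pi.single (⟨b1, h1⟩ : {b : B // R.vtx b = R.tgt α0}) 1 :=
      cast_single_eq (R.mmap α0) heq
    have h2 := (hee ⟨b0, h0⟩).symm.trans heq'
    -- Pi.single (ee ⟨b0,h0⟩) 1 = Pi.single ⟨b1,h1⟩ 1, possibly different instances
    have h3 := congrFun h2 (ee ⟨b0, h0⟩)
    simp only [Pi.single_apply, if_pos rfl] at h3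
    by_cases h4 : ee ⟨b0, h0⟩ = (⟨b1, h1⟩ : {b : B // R.vtx b = R.tgt α0})
    · rw [Ef_eq ee h]
      exact ((congrArg Subtype.val h4).symm).trans rfl
    · rw [if_neg h4] at h3
      simp at h3
  · rintro rfl
    refine ⟨h, Ef_vtx ee h, ?_⟩
    have h5 := hee ⟨b0, h⟩
    have h6 : (ee ⟨b0, h⟩) = ⟨Ef R α0 ee b0, Ef_vtx ee h⟩ := Subtype.ext (Ef_eq ee h).symm
    rw [h6] at h5
    exact cast_single_eq (R.mmap α0) h5

include hee in
lemma exists_mapsTo_iff {b' : B} (h' : R.vtx b' = R.tgt α0) :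
    (∃ b0 ∈ β, R.MapsBasisTo α0 b0 b') ↔ Eb R α0 ee b' ∈ β := by
  constructor
  · rintro ⟨b0, hb0, hm⟩
    obtain ⟨h0, -, -⟩ := id hm
    rw [(mapsTo_iff ee hee h0 b').mp hm]
    rwa [Eb_Ef ee h0]
  · intro h
    exact ⟨Eb R α0 ee b', h, (mapsTo_iff ee hee (Eb_vtx ee h') _).mpr (Ef_Eb ee h').symm⟩

include hee in
lemma mem_fsI {b0 c : B} :
    (⟨b0, c⟩ : (_ : B) × B) ∈ fsI R α0 β ↔
      (b0 ∈ β ∧ R.vtx b0 = R.src α0 ∧ c ∈ β ∧ R.vtx c = R.tgt α0 ∧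
        c < Ef R α0 ee b0 ∧ Eb R α0 ee c ∉ β) := by
  rw [fsI, Finset.mem_sigma, Finset.mem_filter, Finset.mem_filter]
  constructor
  · rintro ⟨⟨h1, h2⟩, h3, h4, h5, h6⟩
    refine ⟨h1, h2, h3, h4, ?_, ?_⟩
    · obtain ⟨b1, hm, hlt⟩ := h5
      rwa [(mapsTo_iff ee hee h2 b1).mp hm] at hlt
    · rwa [exists_mapsTo_iff β ee hee h4] at h6
  · rintro ⟨h1, h2, h3, h4, h5, h6⟩
    exact ⟨⟨h1, h2⟩, h3, h4, ⟨Ef R α0 ee b0, (mapsTo_iff ee hee h2 _).mpr rfl, h5⟩,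
      by rwa [exists_mapsTo_iff β ee hee h4]⟩

variable (hlin : R.Linear)

include hlin hee in
lemma hMap : ∀ x : {b : B // R.vtx b = R.src α0} → K,
    R.mmap α0 x = fun c => x (ee.symm c) := by
  classical
  exact mmap_eq_aux (R.mmap α0) (hlin α0) ee.toEquiv hee

end Ctx

end SchAux

namespace SchAux
open QGr QGr.Rep Submodule Set

section Ctx2

variable {K V0 A B : Type} [Field K] [Fintype V0] [Fintype A] [Fintype B] [LinearOrder B]

/-- The cell-shape predicate at one vertex. -/
def Pred (R : Rep K V0 A B) (r : V0) (γ : Finset B)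
    (Wr : Submodule K ({b : B // R.vtx b = r} → K)) : Prop :=
  ∃ v : {b : B // b ∈ γ ∧ R.vtx b = r} → ({b : B // R.vtx b = r} → K),
    (∀ b0, v b0 ⟨b0.val, b0.prop.2⟩ = 1) ∧
    (∀ b0 b1, b1.val ≠ b0.val → ¬(b1.val < b0.val ∧ b1.val ∉ γ) → v b0 b1 = 0) ∧
    Wr = Submodule.span K (Set.range v)

variable {R : Rep K V0 A B} {α0 : A}

lemma pred_mono {r : V0} {γ γ' : Finset B} (hiff : ∀ b : B, R.vtx b = r → (b ∈ γ ↔ b ∈ γ'))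
    {Wr : Submodule K ({b : B // R.vtx b = r} → K)} (h : Pred R r γ Wr) : Pred R r γ' Wr := by
  obtain ⟨v, h1, h0, hsp⟩ := h
  refine ⟨fun j => v ⟨j.val, (hiff _ j.prop.2).mpr j.prop.1, j.prop.2⟩, fun j => h1 _, ?_, ?_⟩
  · intro j b1 hne hc
    refine h0 _ b1 hne ?_
    rintro ⟨hlt, hmem⟩
    exact hc ⟨hlt, fun hm => hmem ((hiff _ b1.prop).mpr hm)⟩
  · rw [hsp]
    congr 1
    apply le_antisymm
    · rintro _ ⟨j, rfl⟩
      exact ⟨⟨j.val, (hiff _ j.prop.2).mp j.prop.1, j.prop.2⟩, rfl⟩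
    · rintro _ ⟨j, rfl⟩
      exact ⟨⟨j.val, (hiff _ j.prop.2).mpr j.prop.1, j.prop.2⟩, rfl⟩

lemma cellred0 {r : V0} {γ : Finset B}
    (v : {b : B // b ∈ γ ∧ R.vtx b = r} → ({b : B // R.vtx b = r} → K))
    (hz : ∀ b0 b1, b1.val ≠ b0.val → ¬(b1.val < b0.val ∧ b1.val ∉ γ) → v b0 b1 = 0) :
    ∀ j j', j' ≠ j → v j (⟨j'.val, j'.prop.2⟩ : {b : B // R.vtx b = r}) = 0 := fun j j' h =>
  hz j _ (fun hv => h (Subtype.ext hv)) (fun hc => hc.2 j'.prop.1)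

lemma card_Jt (r : V0) (γ : Finset B) :
    Fintype.card {b : B // b ∈ γ ∧ R.vtx b = r} = (γ.filter fun b => R.vtx b = r).card := by
  classical
  rw [Fintype.card_subtype]
  congr 1
  ext b
  simp [Finset.mem_filter]

lemma filter_congr_ne (β : Finset B) {r : V0} (hr : r ≠ R.src α0) :
    (β.filter fun b => R.vtx b ≠ R.src α0).filter (fun b => R.vtx b = r)
      = β.filter (fun b => R.vtx b = r) := by
  ext b
  simp only [Finset.mem_filter, and_assoc]
  constructor
  · rintro ⟨h1, -, h3⟩; exact ⟨h1, h3⟩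
  · rintro ⟨h1, h3⟩; exact ⟨h1, by rw [h3]; exact hr, h3⟩

lemma mem_beta'_iff (β : Finset B) (hloop : R.src α0 ≠ R.tgt α0) {c : B}
    (hq : R.vtx c = R.tgt α0) :
    c ∈ β.filter (fun b => R.vtx b ≠ R.src α0) ↔ c ∈ β := by
  simp only [Finset.mem_filter]
  exact ⟨fun h => h.1, fun h => ⟨h, by rw [hq]; exact Ne.symm hloop⟩⟩

/-- The chosen reduced family of a cell-shaped subspace. -/
noncomputable def vfam {r : V0} {γ : Finset B}
    {Wr : Submodule K ({b : B // R.vtx b = r} → K)} (hP : Pred R r γ Wr) :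
    {b : B // b ∈ γ ∧ R.vtx b = r} → ({b : B // R.vtx b = r} → K) := hP.choose

lemma vfam_diag {r : V0} {γ : Finset B} {Wr : Submodule K ({b : B // R.vtx b = r} → K)}
    (hP : Pred R r γ Wr) (b0) : vfam hP b0 ⟨b0.val, b0.prop.2⟩ = 1 := hP.choose_spec.1 b0

lemma vfam_zero {r : V0} {γ : Finset B} {Wr : Submodule K ({b : B // R.vtx b = r} → K)}
    (hP : Pred R r γ Wr) (b0) (b1) (h1 : b1.val ≠ b0.val)
    (h2 : ¬(b1.val < b0.val ∧ b1.val ∉ γ)) : vfam hP b0 b1 = 0 := hP.choose_spec.2.1 b0 b1 h1 h2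

lemma vfam_span {r : V0} {γ : Finset B} {Wr : Submodule K ({b : B // R.vtx b = r} → K)}
    (hP : Pred R r γ Wr) : Wr = Submodule.span K (Set.range (vfam hP)) := hP.choose_spec.2.2

variable (β : Finset B)
variable (ee : {b : B // R.vtx b = R.src α0} ≃o {b : B // R.vtx b = R.tgt α0})

/-- The coefficient function on the affine coordinates. -/
noncomputable def coef (μ : {i // i ∈ fsI R α0 β} → K) (b0v cv : B) : K :=
  if h : (⟨b0v, cv⟩ : (_ : B) × B) ∈ fsI R α0 β then μ ⟨⟨b0v, cv⟩, h⟩ else 0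

variable {β}

lemma coef_ne_zero_mem {μ : {i // i ∈ fsI R α0 β} → K} {b0v cv : B}
    (h : coef β μ b0v cv ≠ 0) : (⟨b0v, cv⟩ : (_ : B) × B) ∈ fsI R α0 β := by
  by_contra hc
  exact h (dif_neg hc)

variable (hee : ∀ i, R.mmap α0 (Pi.single i 1) = Pi.single (ee i) 1)

include hee in
lemma coef_im_zero (μ : {i // i ∈ fsI R α0 β} → K) (b0v : B) {b1 : B} (hb1 : b1 ∈ β)
    (hv : R.vtx b1 = R.src α0) : coef β μ b0v (Ef R α0 ee b1) = 0 := by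
  rw [coef, dif_neg]
  intro hmem
  have h2 := ((mem_fsI β ee hee).mp hmem).2.2.2.2.2
  rw [Eb_Ef ee hv] at h2
  exact h2 hb1

include hee in
lemma coef_zero_of_not_lt (μ : {i // i ∈ fsI R α0 β} → K) {b0v cv : B}
    (h : ¬ cv < Ef R α0 ee b0v) : coef β μ b0v cv = 0 := by
  rw [coef, dif_neg]
  intro hmem
  exact h ((mem_fsI β ee hee).mp hmem).2.2.2.2.1

end Ctx2

end SchAux

namespace SchAux
open QGr QGr.Rep Submodule Set

section Ctx3

variable {K V0 A B : Type} [Field K] [Fintype V0] [Fintype A] [Fintype B] [LinearOrder B]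
variable {R : Rep K V0 A B} {α0 : A} {β : Finset B}
variable (ee : {b : B // R.vtx b = R.src α0} ≃o {b : B // R.vtx b = R.tgt α0})
variable (hee : ∀ i, R.mmap α0 (Pi.single i 1) = Pi.single (ee i) 1)
variable (hloop : R.src α0 ≠ R.tgt α0)
variable (himg : ∀ b0 ∈ β, R.vtx b0 = R.src α0 → ∃ b1 ∈ β, R.MapsBasisTo α0 b0 b1)

include hee himg in
lemma Ef_mem {b : B} (hb : b ∈ β) (h : R.vtx b = R.src α0) : Ef R α0 ee b ∈ β := by
  obtain ⟨b1, hb1, hm⟩ := himg b hb h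
  rwa [(mapsTo_iff ee hee h b1).mp hm] at hb1

variable {Wq : Submodule K ({b : B // R.vtx b = R.tgt α0} → K)}
variable (hP : Pred R (R.tgt α0) (β.filter fun b => R.vtx b ≠ R.src α0) Wq)
variable (μ : {i // i ∈ fsI R α0 β} → K)

include hloop in
lemma w_zero' (c : {b : B // b ∈ β.filter (fun b => R.vtx b ≠ R.src α0) ∧ R.vtx b = R.tgt α0})
    (x : {b : B // R.vtx b = R.tgt α0}) (h1 : x.val ≠ c.val)
    (h2 : ¬(x.val < c.val ∧ x.val ∉ β)) : vfam hP c x = 0 :=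
  vfam_zero hP c x h1 (fun hh =>
    h2 ⟨hh.1, fun hbx => hh.2 ((mem_beta'_iff β hloop x.prop).mpr hbx)⟩)

/-- The target-space vectors of the backward construction. -/
noncomputable def bwdx (b0 : {b : B // b ∈ β ∧ R.vtx b = R.src α0}) :
    {b : B // R.vtx b = R.tgt α0} → K :=
  vfam hP ⟨Ef R α0 ee b0.val,
      Finset.mem_filter.mpr ⟨Ef_mem ee hee himg b0.prop.1 b0.prop.2,
        by rw [Ef_vtx ee b0.prop.2]; exact Ne.symm hloop⟩,
      Ef_vtx ee b0.prop.2⟩ +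
    ∑ c : {b : B // b ∈ β.filter (fun b => R.vtx b ≠ R.src α0) ∧ R.vtx b = R.tgt α0},
      coef β μ b0.val c.val • vfam hP c

lemma bwdx_mem (b0) : bwdx ee hee hloop himg hP μ b0 ∈ Submodule.span K (Set.range (vfam hP)) :=
  add_mem (subset_span ⟨_, rfl⟩)
    (sum_mem fun c _ => smul_mem _ _ (subset_span ⟨c, rfl⟩))

include hloop in
lemma EVbeta (b0 : {b : B // b ∈ β ∧ R.vtx b = R.src α0})
    (c : {b : B // R.vtx b = R.tgt α0}) (hc : c.val ∈ β) :
    bwdx ee hee hloop himg hP μ b0 c =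
      (if c.val = Ef R α0 ee b0.val then 1 else 0) + coef β μ b0.val c.val := by
  rw [bwdx, Pi.add_apply, Finset.sum_apply]
  congr 1
  · by_cases h : c.val = Ef R α0 ee b0.val
    · rw [if_pos h]
      rw [show c = (⟨Ef R α0 ee b0.val, Ef_eq ee b0.prop.2 ▸ (ee ⟨b0.val, b0.prop.2⟩).prop⟩ :
        {b : B // R.vtx b = R.tgt α0}) from Subtype.ext h]
      exact vfam_diag hP _
    · rw [if_neg h]
      exact w_zero' hloop hP _ c h (fun hh => hh.2 hc)
  · rw [Finset.sum_eq_single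
      (⟨c.val, (mem_beta'_iff β hloop c.prop).mpr hc, c.prop⟩ :
        {b : B // b ∈ β.filter (fun b => R.vtx b ≠ R.src α0) ∧ R.vtx b = R.tgt α0})]
    · have h : vfam hP ⟨c.val, (mem_beta'_iff β hloop c.prop).mpr hc, c.prop⟩ c = 1 :=
        vfam_diag hP _
      rw [Pi.smul_apply, h, smul_eq_mul, mul_one]
    · intro c1 _ hne
      have hv : c.val ≠ c1.val := fun hv => hne (Subtype.ext hv.symm)
      rw [Pi.smul_apply, w_zero' hloop hP c1 c hv (fun hh => hh.2 hc), smul_zero]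
    · intro h; exact absurd (Finset.mem_univ _) h

include hloop in
lemma EVhigh (b0 : {b : B // b ∈ β ∧ R.vtx b = R.src α0})
    (c : {b : B // R.vtx b = R.tgt α0}) (hc : c.val ∉ β)
    (hgt : Ef R α0 ee b0.val < c.val) :
    bwdx ee hee hloop himg hP μ b0 c = 0 := by
  rw [bwdx, Pi.add_apply, Finset.sum_apply]
  rw [w_zero' hloop hP _ c hgt.ne' (fun hh => lt_asymm hgt hh.1)]
  rw [Finset.sum_eq_zero, add_zero]
  intro c1 _
  rw [Pi.smul_apply]
  by_cases hz : coef β μ b0.val c1.val = 0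
  · rw [hz, zero_smul]
  · have hmem := coef_ne_zero_mem hz
    have hlt : c1.val < Ef R α0 ee b0.val := ((mem_fsI β ee hee).mp hmem).2.2.2.2.1
    have hlt2 : c1.val < c.val := lt_trans hlt hgt
    rw [w_zero' hloop hP c1 c hlt2.ne' (fun hh => lt_asymm hlt2 hh.1), smul_zero]

/-- The source-space vectors of the backward construction. -/
noncomputable def bwdv (b0 : {b : B // b ∈ β ∧ R.vtx b = R.src α0}) :
    {b : B // R.vtx b = R.src α0} → K :=
  fun b1 => bwdx ee hee hloop himg hP μ b0 (ee b1)

include hee himg in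
lemma bwdv_diag (b0 : {b : B // b ∈ β ∧ R.vtx b = R.src α0}) :
    bwdv ee hee hloop himg hP μ b0 ⟨b0.val, b0.prop.2⟩ = 1 := by
  have hval : (ee ⟨b0.val, b0.prop.2⟩).val = Ef R α0 ee b0.val := (Ef_eq ee b0.prop.2).symm
  rw [bwdv, EVbeta ee hee hloop himg hP μ b0 _
    (by rw [hval]; exact Ef_mem ee hee himg b0.prop.1 b0.prop.2)]
  rw [hval, if_pos rfl, coef_im_zero ee hee μ b0.val b0.prop.1 b0.prop.2, add_zero]

include hee himg in
lemma bwdv_zero (b0 : {b : B // b ∈ β ∧ R.vtx b = R.src α0})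
    (b1 : {b : B // R.vtx b = R.src α0}) (hne : b1.val ≠ b0.val)
    (hcond : ¬(b1.val < b0.val ∧ b1.val ∉ β)) :
    bwdv ee hee hloop himg hP μ b0 b1 = 0 := by
  have hb1v : (ee b1).val = Ef R α0 ee b1.val := (Ef_eq ee b1.prop).symm
  have hEfne : (ee b1).val ≠ Ef R α0 ee b0.val := by
    intro h
    have h2 : ee b1 = ee ⟨b0.val, b0.prop.2⟩ := Subtype.ext (h.trans (Ef_eq ee b0.prop.2))
    exact hne (congrArg Subtype.val (ee.injective h2))
  by_cases hb1 : b1.val ∈ β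
  · have hc : (ee b1).val ∈ β := by
      rw [hb1v]; exact Ef_mem ee hee himg hb1 b1.prop
    rw [bwdv, EVbeta ee hee hloop himg hP μ b0 _ hc, if_neg hEfne, hb1v,
      coef_im_zero ee hee μ b0.val hb1 b1.prop, add_zero]
  · have hb0lt : b0.val < b1.val := by
      rcases lt_or_gt_of_ne hne with h | h
      · exact absurd ⟨h, hb1⟩ hcond
      · exact h
    have hEflt : Ef R α0 ee b0.val < (ee b1).val := by
      have h3 : (⟨b0.val, b0.prop.2⟩ : {b : B // R.vtx b = R.src α0}) < b1 := hb0lt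
      have h4 := (OrderIso.lt_iff_lt ee).mpr h3
      have h5 : (ee ⟨b0.val, b0.prop.2⟩).val < (ee b1).val := h4
      rwa [← Ef_eq ee b0.prop.2] at h5
    by_cases hc : (ee b1).val ∈ β
    · rw [bwdv, EVbeta ee hee hloop himg hP μ b0 _ hc, if_neg hEfne,
        coef_zero_of_not_lt ee hee μ (lt_asymm hEflt), add_zero]
    · rw [bwdv]
      exact EVhigh ee hee hloop himg hP μ b0 _ hc hEflt

end Ctx3

end SchAux

namespace SchAux
open QGr QGr.Rep Submodule Set

section Ctx4

variable {K V0 A B : Type} [Field K] [Fintype V0] [Fintype A] [Fintype B] [LinearOrder B]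
variable {R : Rep K V0 A B} {α0 : A} {β : Finset B}

lemma inCell_pred {W : R.SubRep} (hW : R.InCell β W) (r : V0) : Pred R r β (W r) := hW r

lemma inCellOn_pred {S0 : Set V0} {γ : Finset B} {W' : R.SubRepOn S0}
    (hW' : R.InCellOn S0 γ W') (pr : {p : V0 // p ∈ S0}) : Pred R ↑pr γ (W' pr) := hW' pr

lemma tgt_mem (hloop : R.src α0 ≠ R.tgt α0) : R.tgt α0 ∈ {r : V0 | r ≠ R.src α0} :=
  Ne.symm hloop

variable (ee : {b : B // R.vtx b = R.src α0} ≃o {b : B // R.vtx b = R.tgt α0})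
variable (hee : ∀ i, R.mmap α0 (Pi.single i 1) = Pi.single (ee i) 1)
variable (hloop : R.src α0 ≠ R.tgt α0)
variable (himg : ∀ b0 ∈ β, R.vtx b0 = R.src α0 → ∃ b1 ∈ β, R.MapsBasisTo α0 b0 b1)

/-- The affine coordinates of a cell element. -/
noncomputable def fwdμ (W : R.SubRep) (hW : R.InCell β W) : {i // i ∈ fsI R α0 β} → K :=
  fun i =>
    vfam (inCell_pred hW (R.src α0))
      ⟨i.val.1, (Finset.mem_filter.mp (Finset.mem_sigma.mp i.prop).1).1,
        (Finset.mem_filter.mp (Finset.mem_sigma.mp i.prop).1).2⟩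
      ⟨Eb R α0 ee i.val.2,
        Eb_vtx ee (Finset.mem_filter.mp (Finset.mem_sigma.mp i.prop).2).2.1⟩

/-- The backward construction of a subrepresentation. -/
noncomputable def bwdW (W' : R.SubRepOn {r : V0 | r ≠ R.src α0})
    (hW' : R.InCellOn {r : V0 | r ≠ R.src α0} (β.filter fun b => R.vtx b ≠ R.src α0) W')
    (μ : {i // i ∈ fsI R α0 β} → K) : R.SubRep := fun r =>
  if h : r = R.src α0 then
    h.symm ▸ Submodule.span K (Set.range
      (bwdv ee hee hloop himg (inCellOn_pred hW' ⟨R.tgt α0, tgt_mem hloop⟩) μ))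
  else W' ⟨r, h⟩

theorem fwd_mem (W : R.SubRep) (hW : W ∈ R.Cell β) :
    R.resOn {r : V0 | r ≠ R.src α0} W ∈
      R.CellOn {r : V0 | r ≠ R.src α0} {a : A | a ≠ α0}
        (β.filter fun b => R.vtx b ≠ R.src α0) := by
  refine ⟨fun a ha h1 h2 x hx => hW.1 a x hx, ?_, ?_⟩
  · intro pr
    rw [filter_congr_ne β (show (pr : V0) ≠ R.src α0 from pr.prop)]
    exact hW.2.1 pr.val
  · intro pr
    refine pred_mono (γ := β) ?_ (inCell_pred hW.2.2 pr.val)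
    intro b hv
    simp only [Finset.mem_filter]
    exact ⟨fun hb => ⟨hb, by rw [hv]; exact pr.prop⟩, fun hb => hb.1⟩

theorem bwd_res (W' : R.SubRepOn {r : V0 | r ≠ R.src α0})
    (hW' : R.InCellOn {r : V0 | r ≠ R.src α0} (β.filter fun b => R.vtx b ≠ R.src α0) W')
    (μ : {i // i ∈ fsI R α0 β} → K) :
    R.resOn {r : V0 | r ≠ R.src α0} (bwdW ee hee hloop himg W' hW' μ) = W' := by
  funext pr
  exact dif_neg pr.prop

end Ctx4

end SchAux

namespace SchAux
open QGr QGr.Rep Submodule Set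

section Ctx5

variable {K V0 A B : Type} [Field K] [Fintype V0] [Fintype A] [Fintype B] [LinearOrder B]
variable {R : Rep K V0 A B} {α0 : A} {β : Finset B}
variable (ee : {b : B // R.vtx b = R.src α0} ≃o {b : B // R.vtx b = R.tgt α0})
variable (hee : ∀ i, R.mmap α0 (Pi.single i 1) = Pi.single (ee i) 1)
variable (hloop : R.src α0 ≠ R.tgt α0)
variable (himg : ∀ b0 ∈ β, R.vtx b0 = R.src α0 → ∃ b1 ∈ β, R.MapsBasisTo α0 b0 b1)
variable (hlin : R.Linear)

include hlin in
lemma mmap_bwdv {Wq : Submodule K ({b : B // R.vtx b = R.tgt α0} → K)}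
    (hP : Pred R (R.tgt α0) (β.filter fun b => R.vtx b ≠ R.src α0) Wq)
    (μ : {i // i ∈ fsI R α0 β} → K) (b0) :
    R.mmap α0 (bwdv ee hee hloop himg hP μ b0) = bwdx ee hee hloop himg hP μ b0 := by
  rw [hMap ee hee hlin]
  funext c
  show bwdx ee hee hloop himg hP μ b0 (ee (ee.symm c)) = bwdx ee hee hloop himg hP μ b0 c
  rw [OrderIso.apply_symm_apply]

include hlin in
theorem bwd_mem (hend : ∀ a : A, a ≠ α0 → R.src a ≠ R.src α0 ∧ R.tgt a ≠ R.src α0)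
    (W' : R.SubRepOn {r : V0 | r ≠ R.src α0})
    (hWc : W' ∈ R.CellOn {r : V0 | r ≠ R.src α0} {a : A | a ≠ α0}
      (β.filter fun b => R.vtx b ≠ R.src α0))
    (μ : {i // i ∈ fsI R α0 β} → K) :
    bwdW ee hee hloop himg W' hWc.2.2 μ ∈ R.Cell β := by
  have e1 : bwdW ee hee hloop himg W' hWc.2.2 μ (R.src α0) = Submodule.span K (Set.range
      (bwdv ee hee hloop himg (inCellOn_pred hWc.2.2 ⟨R.tgt α0, tgt_mem hloop⟩) μ)) :=
    dif_pos rfl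
  have e2 : ∀ (r : V0) (h : r ≠ R.src α0),
      bwdW ee hee hloop himg W' hWc.2.2 μ r = W' ⟨r, h⟩ := fun r h => dif_neg h
  refine ⟨?_, ?_, ?_⟩
  · intro a x hx
    by_cases ha : a = α0
    · subst ha
      rw [e1] at hx
      rw [e2 _ (tgt_mem hloop)]
      have h5 : Submodule.map (IsLinearMap.mk' _ (hlin a)) (Submodule.span K (Set.range
          (bwdv ee hee hloop himg (inCellOn_pred hWc.2.2 ⟨R.tgt a, tgt_mem hloop⟩) μ))) ≤
          W' ⟨R.tgt a, tgt_mem hloop⟩ := by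
        rw [Submodule.map_span]
        apply Submodule.span_le.mpr
        rintro _ ⟨_, ⟨b0, rfl⟩, rfl⟩
        show R.mmap a (bwdv ee hee hloop himg
          (inCellOn_pred hWc.2.2 ⟨R.tgt a, tgt_mem hloop⟩) μ b0) ∈ _
        rw [mmap_bwdv ee hee hloop himg hlin _ μ b0]
        have hmem := bwdx_mem ee hee hloop himg
          (inCellOn_pred hWc.2.2 ⟨R.tgt a, tgt_mem hloop⟩) μ b0
        rwa [← vfam_span (inCellOn_pred hWc.2.2 ⟨R.tgt a, tgt_mem hloop⟩)] at hmem
      exact h5 (Submodule.mem_map_of_mem hx)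
    · obtain ⟨hs, ht⟩ := hend a ha
      rw [e2 _ hs] at hx
      rw [e2 _ ht]
      exact hWc.1 a ha hs ht x hx
  · intro r
    by_cases hr : r = R.src α0
    · subst hr
      rw [e1]
      rw [red_finrank (fun j => (⟨j.val, j.prop.2⟩ : {b : B // R.vtx b = R.src α0}))
        (bwdv ee hee hloop himg (inCellOn_pred hWc.2.2 ⟨R.tgt α0, tgt_mem hloop⟩) μ)
        (bwdv_diag ee hee hloop himg _ μ)
        (cellred0 _ (bwdv_zero ee hee hloop himg _ μ))]
      exact card_Jt _ _
    · rw [e2 _ hr, ← filter_congr_ne β hr]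
      exact hWc.2.1 ⟨r, hr⟩
  · intro r
    by_cases hr : r = R.src α0
    · subst hr
      exact ⟨bwdv ee hee hloop himg (inCellOn_pred hWc.2.2 ⟨R.tgt α0, tgt_mem hloop⟩) μ,
        bwdv_diag ee hee hloop himg _ μ, bwdv_zero ee hee hloop himg _ μ, e1⟩
    · rw [e2 r hr]
      refine pred_mono ?_ (inCellOn_pred hWc.2.2 ⟨r, hr⟩)
      intro b hv
      simp only [Finset.mem_filter]
      exact ⟨fun hb => hb.1, fun hb => ⟨hb, by rw [hv]; exact hr⟩⟩

end Ctx5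

end SchAux

namespace SchAux
open QGr QGr.Rep Submodule Set

section Ctx6

variable {K V0 A B : Type} [Field K] [Fintype V0] [Fintype A] [Fintype B] [LinearOrder B]
variable {R : Rep K V0 A B} {α0 : A} {β : Finset B}
variable (ee : {b : B // R.vtx b = R.src α0} ≃o {b : B // R.vtx b = R.tgt α0})
variable (hee : ∀ i, R.mmap α0 (Pi.single i 1) = Pi.single (ee i) 1)
variable (hloop : R.src α0 ≠ R.tgt α0)
variable (himg : ∀ b0 ∈ β, R.vtx b0 = R.src α0 → ∃ b1 ∈ β, R.MapsBasisTo α0 b0 b1)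
variable (hlin : R.Linear)

theorem fwd_bwd (W' : R.SubRepOn {r : V0 | r ≠ R.src α0})
    (hW' : R.InCellOn {r : V0 | r ≠ R.src α0} (β.filter fun b => R.vtx b ≠ R.src α0) W')
    (μ : {i // i ∈ fsI R α0 β} → K)
    (hW : R.InCell β (bwdW ee hee hloop himg W' hW' μ)) :
    fwdμ ee (bwdW ee hee hloop himg W' hW' μ) hW = μ := by
  have hsp : Submodule.span K (Set.range (vfam (inCell_pred hW (R.src α0)))) =
      Submodule.span K (Set.range
        (bwdv ee hee hloop himg (inCellOn_pred hW' ⟨R.tgt α0, tgt_mem hloop⟩) μ)) := by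
    rw [← vfam_span (inCell_pred hW (R.src α0))]
    exact dif_pos rfl
  have hveq : vfam (inCell_pred hW (R.src α0)) =
      bwdv ee hee hloop himg (inCellOn_pred hW' ⟨R.tgt α0, tgt_mem hloop⟩) μ :=
    red_unique (fun j => (⟨j.val, j.prop.2⟩ : {b : B // R.vtx b = R.src α0})) _ _
      (vfam_diag _) (cellred0 _ (vfam_zero _))
      (bwdv_diag ee hee hloop himg _ μ) (cellred0 _ (bwdv_zero ee hee hloop himg _ μ)) hsp
  funext i
  have hi := (mem_fsI β ee hee).mp i.prop
  rw [fwdμ, hveq]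
  simp only [bwdv]
  have hc : (ee ⟨Eb R α0 ee i.val.2,
      Eb_vtx ee (Finset.mem_filter.mp (Finset.mem_sigma.mp i.prop).2).2.1⟩).val = i.val.2 := by
    rw [← Ef_eq ee (Eb_vtx ee hi.2.2.2.1)]
    exact Ef_Eb ee hi.2.2.2.1
  rw [EVbeta ee hee hloop himg _ μ _ _ (by rw [hc]; exact hi.2.2.1)]
  rw [hc, if_neg (ne_of_lt hi.2.2.2.2.1), zero_add, coef, dif_pos i.prop]

end Ctx6

end SchAux

namespace SchAux
open QGr QGr.Rep Submodule Set

section Ctx7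

variable {K V0 A B : Type} [Field K] [Fintype V0] [Fintype A] [Fintype B] [LinearOrder B]
variable {R : Rep K V0 A B} {α0 : A} {β : Finset B}
variable (ee : {b : B // R.vtx b = R.src α0} ≃o {b : B // R.vtx b = R.tgt α0})
variable (hee : ∀ i, R.mmap α0 (Pi.single i 1) = Pi.single (ee i) 1)
variable (hloop : R.src α0 ≠ R.tgt α0)
variable (himg : ∀ b0 ∈ β, R.vtx b0 = R.src α0 → ∃ b1 ∈ β, R.MapsBasisTo α0 b0 b1)
variable (hlin : R.Linear)

include hlin in
theorem bwd_fwd (W : R.SubRep) (hcell : W ∈ R.Cell β)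
    (hW' : R.InCellOn {r : V0 | r ≠ R.src α0} (β.filter fun b => R.vtx b ≠ R.src α0)
      (R.resOn {r : V0 | r ≠ R.src α0} W)) :
    bwdW ee hee hloop himg (R.resOn {r : V0 | r ≠ R.src α0} W) hW'
      (fwdμ ee W hcell.2.2) = W := by
  funext r
  by_cases hr : r = R.src α0
  case neg => exact dif_neg hr
  case pos =>
  subst hr
  have e1 : bwdW ee hee hloop himg (R.resOn {r : V0 | r ≠ R.src α0} W) hW'
      (fwdμ ee W hcell.2.2) (R.src α0) = Submodule.span K (Set.range
        (bwdv ee hee hloop himg (inCellOn_pred hW' ⟨R.tgt α0, tgt_mem hloop⟩)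
          (fwdμ ee W hcell.2.2))) := dif_pos rfl
  rw [e1]
  have hkey : bwdv ee hee hloop himg (inCellOn_pred hW' ⟨R.tgt α0, tgt_mem hloop⟩)
      (fwdμ ee W hcell.2.2) = vfam (inCell_pred hcell.2.2 (R.src α0)) := by
    funext b0
    -- step 1 : `bwdx b0` equals the image of the chosen vector under the arrow map
    have hvmem : vfam (inCell_pred hcell.2.2 (R.src α0)) b0 ∈ W (R.src α0) := by
      have h0 : vfam (inCell_pred hcell.2.2 (R.src α0)) b0 ∈
          Submodule.span K (Set.range (vfam (inCell_pred hcell.2.2 (R.src α0)))) :=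
        subset_span ⟨b0, rfl⟩
      rwa [← vfam_span (inCell_pred hcell.2.2 (R.src α0))] at h0
    have hu : R.mmap α0 (vfam (inCell_pred hcell.2.2 (R.src α0)) b0) ∈
        Submodule.span K (Set.range (vfam (inCellOn_pred hW' ⟨R.tgt α0, tgt_mem hloop⟩))) := by
      have h2 : R.mmap α0 (vfam (inCell_pred hcell.2.2 (R.src α0)) b0) ∈
          R.resOn {r : V0 | r ≠ R.src α0} W ⟨R.tgt α0, tgt_mem hloop⟩ :=
        hcell.1 α0 _ hvmem
      rwa [vfam_span (inCellOn_pred hW' ⟨R.tgt α0, tgt_mem hloop⟩)] at h2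
    have hexp := red_expand (fun c => (⟨c.val, c.prop.2⟩ : {b : B // R.vtx b = R.tgt α0}))
      (vfam (inCellOn_pred hW' ⟨R.tgt α0, tgt_mem hloop⟩))
      (vfam_diag _) (cellred0 _ (vfam_zero _)) hu
    have hxu : bwdx ee hee hloop himg (inCellOn_pred hW' ⟨R.tgt α0, tgt_mem hloop⟩)
        (fwdμ ee W hcell.2.2) b0 =
        R.mmap α0 (vfam (inCell_pred hcell.2.2 (R.src α0)) b0) := by
      rw [← hexp, bwdx]
      have hsingle : vfam (inCellOn_pred hW' ⟨R.tgt α0, tgt_mem hloop⟩)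
          ⟨Ef R α0 ee b0.val,
            Finset.mem_filter.mpr ⟨Ef_mem ee hee himg b0.prop.1 b0.prop.2,
              by rw [Ef_vtx ee b0.prop.2]; exact Ne.symm hloop⟩,
            Ef_vtx ee b0.prop.2⟩ =
          ∑ c1, (if c1 = (⟨Ef R α0 ee b0.val,
            Finset.mem_filter.mpr ⟨Ef_mem ee hee himg b0.prop.1 b0.prop.2,
              by rw [Ef_vtx ee b0.prop.2]; exact Ne.symm hloop⟩,
            Ef_vtx ee b0.prop.2⟩ :
              {b : B // b ∈ β.filter (fun b => R.vtx b ≠ R.src α0) ∧ R.vtx b = R.tgt α0})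
            then (1:K) else 0) • vfam (inCellOn_pred hW' ⟨R.tgt α0, tgt_mem hloop⟩) c1 := by
        rw [Finset.sum_eq_single (⟨Ef R α0 ee b0.val,
            Finset.mem_filter.mpr ⟨Ef_mem ee hee himg b0.prop.1 b0.prop.2,
              by rw [Ef_vtx ee b0.prop.2]; exact Ne.symm hloop⟩,
            Ef_vtx ee b0.prop.2⟩ :
              {b : B // b ∈ β.filter (fun b => R.vtx b ≠ R.src α0) ∧ R.vtx b = R.tgt α0})]
        · rw [if_pos rfl, one_smul]
        · intro c1 _ hne; rw [if_neg hne, zero_smul]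
        · intro h; exact absurd (Finset.mem_univ _) h
      rw [hsingle, ← Finset.sum_add_distrib]
      apply Finset.sum_congr rfl
      intro c1 _
      rw [← add_smul]
      congr 1
      -- pointwise coefficient identity
      have hufc : R.mmap α0 (vfam (inCell_pred hcell.2.2 (R.src α0)) b0)
          (⟨c1.val, c1.prop.2⟩ : {b : B // R.vtx b = R.tgt α0}) =
          vfam (inCell_pred hcell.2.2 (R.src α0)) b0
            (ee.symm ⟨c1.val, c1.prop.2⟩) := by
        rw [hMap ee hee hlin]
      rw [hufc]
      by_cases hc1v : c1.val = Ef R α0 ee b0.val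
      · rw [if_pos (Subtype.ext hc1v)]
        have hz : coef β (fwdμ ee W hcell.2.2) b0.val c1.val = 0 := by
          rw [hc1v]
          exact coef_im_zero ee hee (fwdμ ee W hcell.2.2) b0.val b0.prop.1 b0.prop.2
        rw [hz, add_zero]
        have h6 : (⟨c1.val, c1.prop.2⟩ : {b : B // R.vtx b = R.tgt α0}) =
            ee ⟨b0.val, b0.prop.2⟩ := Subtype.ext (hc1v.trans (Ef_eq ee b0.prop.2))
        rw [h6, OrderIso.symm_apply_apply]
        exact (vfam_diag _ b0).symm
      · rw [if_neg (fun h => hc1v (congrArg Subtype.val h)), zero_add]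
        by_cases hmem : (⟨b0.val, c1.val⟩ : (_ : B) × B) ∈ fsI R α0 β
        · rw [coef, dif_pos hmem]
          exact congrArg (vfam (inCell_pred hcell.2.2 (R.src α0)) b0)
            (Subtype.ext (Eb_eq ee c1.prop.2))
        · rw [coef, dif_neg hmem]
          refine (vfam_zero (inCell_pred hcell.2.2 (R.src α0)) b0
            (ee.symm ⟨c1.val, c1.prop.2⟩) ?_ ?_).symm
          · intro heq
            have h7 : ee.symm (⟨c1.val, c1.prop.2⟩ :
                {b : B // R.vtx b = R.tgt α0}) = ⟨b0.val, b0.prop.2⟩ := Subtype.ext heq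
            have h8 : (⟨c1.val, c1.prop.2⟩ : {b : B // R.vtx b = R.tgt α0}) =
                ee ⟨b0.val, b0.prop.2⟩ := by
              rw [← h7, OrderIso.apply_symm_apply]
            exact hc1v ((congrArg Subtype.val h8).trans (Ef_eq ee b0.prop.2).symm)
          · rintro ⟨hlt, hnm⟩
            refine hmem ((mem_fsI β ee hee).mpr ⟨b0.prop.1, b0.prop.2,
              (Finset.mem_filter.mp c1.prop.1).1, c1.prop.2, ?_, ?_⟩)
            · have h9 : ee.symm (⟨c1.val, c1.prop.2⟩ : {b : B // R.vtx b = R.tgt α0}) <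
                  ⟨b0.val, b0.prop.2⟩ := Subtype.coe_lt_coe.mp hlt
              have h10 := (OrderIso.lt_iff_lt ee).mpr h9
              rw [OrderIso.apply_symm_apply] at h10
              have h11 := Subtype.coe_lt_coe.mpr h10
              rwa [← Ef_eq ee b0.prop.2] at h11
            · rw [Eb_eq ee c1.prop.2]
              exact hnm
    -- step 2 : conclude pointwise
    funext b1
    simp only [bwdv]
    rw [hxu, hMap ee hee hlin]
    simp only [OrderIso.symm_apply_apply]
  rw [hkey, ← vfam_span (inCell_pred hcell.2.2 (R.src α0))]

end Ctx7

end SchAux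

open QGr in
/-- Let `α₀ : p → q` be an arrow of `T` such that `p` is incident to no other
arrow, and let `T'` be `T` with `p` and `α₀` removed.  If the ordered basis `B` puts all of
`B_p` at the end of `B` and the matrix of `M_{α₀}` is the identity, and if
`M_{α₀}(β_p) ⊆ β_q`, then `C_β^M ≅ C_{β'}^{M'} × K^n` (first component the restriction
to `T'`) with `n = Σ_{b ∈ β_p} #{b' ∈ β_q : b' < M_{α₀}(b), b' ∉ M_{α₀}(β_p)}`. -/
theorem schubert_cell_remove_source
    {K V0 A B : Type} [Field K] [Fintype V0] [Fintype A] [Fintype B] [LinearOrder B]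
    (R : Rep K V0 A B) (hlin : R.Linear)
    (α0 : A) (hloop : R.src α0 ≠ R.tgt α0)
    (hend : ∀ a : A, a ≠ α0 → R.src a ≠ R.src α0 ∧ R.tgt a ≠ R.src α0)
    (hord : ∀ b b' : B, R.vtx b ≠ R.src α0 → R.vtx b' = R.src α0 → b < b')
    (hid : R.IsIdMat α0)
    (β : Finset B)
    (himg : ∀ b0 ∈ β, R.vtx b0 = R.src α0 → ∃ b1 ∈ β, R.MapsBasisTo α0 b0 b1) :
    ∃ e : ↥(R.Cell β) ≃
        ↥(R.CellOn {r : V0 | r ≠ R.src α0} {a : A | a ≠ α0}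
            (β.filter fun b => R.vtx b ≠ R.src α0)) ×
        (Fin (∑ b ∈ β.filter (fun b => R.vtx b = R.src α0),
          (β.filter (fun b' => R.vtx b' = R.tgt α0 ∧
            (∃ b1 : B, R.MapsBasisTo α0 b b1 ∧ b' < b1) ∧
            ¬ ∃ b0 ∈ β, R.MapsBasisTo α0 b0 b')).card) → K),
      ∀ W : ↥(R.Cell β),
        ((e W).1 : R.SubRepOn {r : V0 | r ≠ R.src α0}) =
          R.resOn {r : V0 | r ≠ R.src α0} W.val := by
  classical
  obtain ⟨ee, hee⟩ := hid
  have hcard : (SchAux.fsI R α0 β).card = ∑ b ∈ β.filter (fun b => R.vtx b = R.src α0),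
      (β.filter (fun b' => R.vtx b' = R.tgt α0 ∧
        (∃ b1 : B, R.MapsBasisTo α0 b b1 ∧ b' < b1) ∧
        ¬ ∃ b0 ∈ β, R.MapsBasisTo α0 b0 b')).card := Finset.card_sigma _ _
  refine ⟨(Equiv.trans (α := ↥(R.Cell β))
    (β := ↥(R.CellOn {r : V0 | r ≠ R.src α0} {a : A | a ≠ α0}
          (β.filter fun b => R.vtx b ≠ R.src α0)) ×
        ({i // i ∈ SchAux.fsI R α0 β} → K))
    { toFun := fun W => (⟨R.resOn {r : V0 | r ≠ R.src α0} W.val,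
        SchAux.fwd_mem W.val W.prop⟩, SchAux.fwdμ ee W.val W.prop.2.2)
      invFun := fun Wμ => ⟨SchAux.bwdW ee hee hloop himg Wμ.1.val Wμ.1.prop.2.2 Wμ.2,
        SchAux.bwd_mem ee hee hloop himg hlin hend Wμ.1.val Wμ.1.prop Wμ.2⟩
      left_inv := fun W => Subtype.ext
        (SchAux.bwd_fwd ee hee hloop himg hlin W.val W.prop
          (SchAux.fwd_mem W.val W.prop).2.2)
      right_inv := fun Wμ => Prod.ext
        (Subtype.ext (SchAux.bwd_res ee hee hloop himg Wμ.1.val Wμ.1.prop.2.2 Wμ.2))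
        (SchAux.fwd_bwd ee hee hloop himg Wμ.1.val Wμ.1.prop.2.2 Wμ.2
          (SchAux.bwd_mem ee hee hloop himg hlin hend Wμ.1.val Wμ.1.prop Wμ.2).2.2) }
    (Equiv.prodCongr (Equiv.refl _) (Equiv.arrowCongr
      ((SchAux.fsI R α0 β).equivFin.trans (finCongr hcard)) (Equiv.refl K)))), ?_⟩
  intro W
  rfl
end
end

section
/- Let T be a quiver, α₀ : p → q an arrow such that the vertex q is incident to no arrow of T other than α₀, and T' the quiver obtained from T by removing q and α₀. Let M be a representation of T over a field K with M_{α₀} an isomorphism, M' the restriction of M to T', e a dimension vector for T with e_p ≤ e_q ≤ dim M_q, and e' the restriction of e to T'. Then for every V' ∈ Gr_{e'}(M'), the fibre of the restriction map Gr_e(M) → Gr_{e'}(M') over V', namely the set {V_q ⊆ M_q : dim V_q = e_q and M_{α₀}(V'_p) ⊆ V_q}, is in bijection with the Grassmannian of (e_q − e_p)-dimensional subspaces of the (dim M_q − e_p)-dimensional quotient space M_q / M_{α₀}(V'_p). In particular all fibres are in bijection with the Grassmannian Gr(e_q − e_p, dim M_q − e_p). -/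
open scoped Classical

lemma finrank_comap_mkQ_aux {K M : Type} [Field K] [AddCommGroup M] [Module K M]
    [FiniteDimensional K M] (N : Submodule K M) (U : Submodule K (M ⧸ N)) :
    Module.finrank K (U.comap N.mkQ) = Module.finrank K U + Module.finrank K N := by
  set W := U.comap N.mkQ with hW
  have hNW : N ≤ W := fun x hx => by
    simp [hW, Submodule.mem_comap, (Submodule.Quotient.mk_eq_zero N).2 hx]
  let f : W →ₗ[K] M ⧸ N := N.mkQ.comp W.subtype
  have hker : LinearMap.ker f = N.comap W.subtype := by
    ext x
    simp [f, Submodule.Quotient.mk_eq_zero]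
  have hrange : LinearMap.range f = U := by
    rw [LinearMap.range_comp, Submodule.range_subtype]
    exact Submodule.map_comap_eq_of_surjective N.mkQ_surjective U
  have h := LinearMap.finrank_range_add_finrank_ker f
  rw [hker, hrange] at h
  rw [(Submodule.comapSubtypeEquivOfLe hNW).finrank_eq] at h
  exact h.symm

/-- Grassmannian equivalence along a linear equivalence. -/
noncomputable def grassmannEquivOfLinearEquiv {K M1 M2 : Type} [Field K]
    [AddCommGroup M1] [Module K M1] [AddCommGroup M2] [Module K M2]
    (φ : M1 ≃ₗ[K] M2) (k : ℕ) :
    {U : Submodule K M1 // Module.finrank K U = k} ≃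
      {U : Submodule K M2 // Module.finrank K U = k} :=
  Equiv.subtypeEquiv (Submodule.orderIsoMapComap φ).toEquiv (fun U => by
    have : Module.finrank K (Submodule.map (φ : M1 →ₗ[K] M2) U) = Module.finrank K U :=
      LinearEquiv.finrank_map_eq φ U
    simp only [Submodule.orderIsoMapComap, RelIso.coe_fn_toEquiv]
    constructor
    · intro h; rw [← h]; exact this
    · intro h; rw [← h]; exact this.symm)

/-- Let `α₀ : p → q` be an arrow of the quiver `T` such that `q` is not
incident to any other arrow, `T'` the quiver with `q` and `α₀` removed, `M` a representation
with `M_{α₀}` an isomorphism, and `e` a dimension vector with `e_p ≤ e_q ≤ dim M_q`.  Then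
the fibre of the restriction map `Gr_e(M) → Gr_{e'}(M')` over any `V' ∈ Gr_{e'}(M')` is in
bijection with the Grassmannian of `(e_q − e_p)`-dimensional subspaces of the
`(dim M_q − e_p)`-dimensional quotient `M_q / M_{α₀}(V'_p)`; in particular with the
Grassmannian `Gr(e_q − e_p, dim M_q − e_p)`. -/
theorem quiver_grassmannian_fibre_remove_sink
    {K V0 A : Type} [Field K] [Fintype V0] [Fintype A]
    (src tgt : A → V0)
    (Mod : V0 → Type) [∀ p, AddCommGroup (Mod p)] [∀ p, Module K (Mod p)]
    [∀ p, FiniteDimensional K (Mod p)]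
    (mmap : ∀ a : A, Mod (src a) →ₗ[K] Mod (tgt a))
    (α0 : A) (hloop : src α0 ≠ tgt α0)
    (hend : ∀ a : A, a ≠ α0 → src a ≠ tgt α0 ∧ tgt a ≠ tgt α0)
    (hiso : Function.Bijective (mmap α0))
    (e : V0 → ℕ) (he1 : e (src α0) ≤ e (tgt α0))
    (he2 : e (tgt α0) ≤ Module.finrank K (Mod (tgt α0))) :
    ∀ V' : ∀ r : {r : V0 // r ≠ tgt α0}, Submodule K (Mod r.val),
      (∀ a : A, ∀ (h1 : src a ≠ tgt α0) (h2 : tgt a ≠ tgt α0),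
        ∀ x ∈ V' ⟨src a, h1⟩, mmap a x ∈ V' ⟨tgt a, h2⟩) →
      (∀ r, Module.finrank K (V' r) = e r.val) →
      Nonempty
        ({W : ∀ r : V0, Submodule K (Mod r) //
            (∀ a : A, ∀ x ∈ W (src a), mmap a x ∈ W (tgt a)) ∧
            (∀ r : V0, Module.finrank K (W r) = e r) ∧
            (∀ r : {r : V0 // r ≠ tgt α0}, W r.val = V' r)} ≃
          {U : Submodule K
              ((Mod (tgt α0)) ⧸ Submodule.map (mmap α0) (V' ⟨src α0, hloop⟩)) //
            Module.finrank K U = e (tgt α0) - e (src α0)}) ∧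
      Nonempty
        ({W : ∀ r : V0, Submodule K (Mod r) //
            (∀ a : A, ∀ x ∈ W (src a), mmap a x ∈ W (tgt a)) ∧
            (∀ r : V0, Module.finrank K (W r) = e r) ∧
            (∀ r : {r : V0 // r ≠ tgt α0}, W r.val = V' r)} ≃
          {U : Submodule K
              (Fin (Module.finrank K (Mod (tgt α0)) - e (src α0)) → K) //
            Module.finrank K U = e (tgt α0) - e (src α0)}) := by
  intro V' hsub hrank
  set N : Submodule K (Mod (tgt α0)) := Submodule.map (mmap α0) (V' ⟨src α0, hloop⟩) with hN
  have hNrank : Module.finrank K N = e (src α0) := by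
    rw [← hrank ⟨src α0, hloop⟩]
    exact (LinearEquiv.finrank_eq
      (Submodule.equivMapOfInjective (mmap α0) hiso.injective (V' ⟨src α0, hloop⟩))).symm
  -- base family
  let base : ∀ r : V0, Submodule K (Mod r) :=
    fun r => if h : r ≠ tgt α0 then V' ⟨r, h⟩ else ⊥
  have hbase : ∀ (r : V0) (h : r ≠ tgt α0), base r = V' ⟨r, h⟩ := fun r h => dif_pos h
  -- the first equivalence
  have E1 : {W : ∀ r : V0, Submodule K (Mod r) //
            (∀ a : A, ∀ x ∈ W (src a), mmap a x ∈ W (tgt a)) ∧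
            (∀ r : V0, Module.finrank K (W r) = e r) ∧
            (∀ r : {r : V0 // r ≠ tgt α0}, W r.val = V' r)} ≃
          {U : Submodule K ((Mod (tgt α0)) ⧸ N) //
            Module.finrank K U = e (tgt α0) - e (src α0)} := by
    refine
      { toFun := fun W => ⟨Submodule.map N.mkQ (W.1 (tgt α0)), ?_⟩
        invFun := fun U =>
          ⟨Function.update base (tgt α0) (Submodule.comap N.mkQ U.1), ?_, ?_, ?_⟩
        left_inv := ?_
        right_inv := ?_ }
    · -- rank of the image in the quotient
      obtain ⟨W, hWsub, hWrank, hWres⟩ := W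
      show Module.finrank K (Submodule.map N.mkQ (W (tgt α0))) = e (tgt α0) - e (src α0)
      have hNle : N ≤ W (tgt α0) := by
        rintro x ⟨y, hy, rfl⟩
        exact hWsub α0 y (by rw [hWres ⟨src α0, hloop⟩]; exact hy)
      have hcm : Submodule.comap N.mkQ (Submodule.map N.mkQ (W (tgt α0))) = W (tgt α0) := by
        rw [Submodule.comap_map_eq, Submodule.ker_mkQ, sup_eq_left.2 hNle]
      have := finrank_comap_mkQ_aux N (Submodule.map N.mkQ (W (tgt α0)))
      rw [hcm, hWrank (tgt α0), hNrank] at this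
      omega
    · -- subrepresentation condition
      intro a x hx
      by_cases ha : a = α0
      · subst ha
        rw [Function.update_of_ne hloop, hbase _ hloop] at hx
        rw [Function.update_self]
        have hxN : mmap a x ∈ N := ⟨x, hx, rfl⟩
        simp [Submodule.mem_comap, (Submodule.Quotient.mk_eq_zero N).2 hxN]
      · obtain ⟨h1, h2⟩ := hend a ha
        rw [Function.update_of_ne h1, hbase _ h1] at hx
        rw [Function.update_of_ne h2, hbase _ h2]
        exact hsub a h1 h2 x hx
    · -- rank condition
      intro r
      by_cases h : r = tgt α0
      · subst h
        rw [Function.update_self, finrank_comap_mkQ_aux N U.1, U.2, hNrank,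
          Nat.sub_add_cancel he1]
      · rw [Function.update_of_ne h, hbase _ h, hrank ⟨r, h⟩]
    · -- restriction condition
      intro r
      rw [Function.update_of_ne r.2, hbase _ r.2]
    · -- left inverse
      rintro ⟨W, hWsub, hWrank, hWres⟩
      apply Subtype.ext
      funext r
      by_cases h : r = tgt α0
      · subst h
        have hNle : N ≤ W (tgt α0) := by
          rintro x ⟨y, hy, rfl⟩
          exact hWsub α0 y (by rw [hWres ⟨src α0, hloop⟩]; exact hy)
        simp only [Function.update_self]
        rw [Submodule.comap_map_eq, Submodule.ker_mkQ, sup_eq_left.2 hNle]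
      · simp only
        rw [Function.update_of_ne h, hbase _ h, hWres ⟨r, h⟩]
    · -- right inverse
      rintro ⟨U, hU⟩
      apply Subtype.ext
      simp only [Function.update_self]
      exact Submodule.map_comap_eq_of_surjective N.mkQ_surjective U
  refine ⟨⟨E1⟩, ?_⟩
  -- second equivalence: identify the quotient with a standard space
  have hQrank : Module.finrank K ((Mod (tgt α0)) ⧸ N) =
      Module.finrank K (Mod (tgt α0)) - e (src α0) := by
    have := Submodule.finrank_quotient_add_finrank N
    omega
  have hfin : Module.finrank K
      (Fin (Module.finrank K (Mod (tgt α0)) - e (src α0)) → K) =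
      Module.finrank K (Mod (tgt α0)) - e (src α0) := Module.finrank_fin_fun K
  obtain ⟨φ⟩ := FiniteDimensional.nonempty_linearEquiv_of_finrank_eq
    (hQrank.trans hfin.symm)
  exact ⟨E1.trans (grassmannEquivOfLinearEquiv φ (e (tgt α0) - e (src α0)))⟩
end

section
/- Let T be a quiver, α₀ : p → q an arrow such that the vertex p is incident to no arrow of T other than α₀, and T' the quiver obtained from T by removing p and α₀. Let M be a representation of T over a field K with M_{α₀} an isomorphism, M' the restriction of M to T', e a dimension vector for T with e_p ≤ e_q, and e' the restriction of e to T'. Then for every V' ∈ Gr_{e'}(M'), the fibre of the restriction map Gr_e(M) → Gr_{e'}(M') over V', namely the set {V_p ⊆ M_p : dim V_p = e_p and M_{α₀}(V_p) ⊆ V'_q}, is in bijection with the set of e_p-dimensional subspaces of the e_q-dimensional space M_{α₀}⁻¹(V'_q). In particular all fibres are in bijection with the Grassmannian Gr(e_p, e_q). -/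
open scoped Classical

/-- Let `α₀ : p → q` be an arrow of the quiver `T` such that `p` is not
incident to any other arrow, `T'` the quiver with `p` and `α₀` removed, `M` a representation
with `M_{α₀}` an isomorphism, and `e` a dimension vector with `e_p ≤ e_q`.  Then the fibre of
the restriction map `Gr_e(M) → Gr_{e'}(M')` over any `V' ∈ Gr_{e'}(M')` is in bijection with
the set of `e_p`-dimensional subspaces of the `e_q`-dimensional space `M_{α₀}⁻¹(V'_q)`; in
particular with the Grassmannian `Gr(e_p, e_q)`. -/
theorem quiver_grassmannian_fibre_remove_source
    {K V0 A : Type} [Field K] [Fintype V0] [Fintype A]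
    (src tgt : A → V0)
    (Mod : V0 → Type) [∀ p, AddCommGroup (Mod p)] [∀ p, Module K (Mod p)]
    [∀ p, FiniteDimensional K (Mod p)]
    (mmap : ∀ a : A, Mod (src a) →ₗ[K] Mod (tgt a))
    (α0 : A) (hloop : src α0 ≠ tgt α0)
    (hend : ∀ a : A, a ≠ α0 → src a ≠ src α0 ∧ tgt a ≠ src α0)
    (hiso : Function.Bijective (mmap α0))
    (e : V0 → ℕ) (he1 : e (src α0) ≤ e (tgt α0)) :
    ∀ V' : ∀ r : {r : V0 // r ≠ src α0}, Submodule K (Mod r.val),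
      (∀ a : A, ∀ (h1 : src a ≠ src α0) (h2 : tgt a ≠ src α0),
        ∀ x ∈ V' ⟨src a, h1⟩, mmap a x ∈ V' ⟨tgt a, h2⟩) →
      (∀ r, Module.finrank K (V' r) = e r.val) →
      Nonempty
        ({W : ∀ r : V0, Submodule K (Mod r) //
            (∀ a : A, ∀ x ∈ W (src a), mmap a x ∈ W (tgt a)) ∧
            (∀ r : V0, Module.finrank K (W r) = e r) ∧
            (∀ r : {r : V0 // r ≠ src α0}, W r.val = V' r)} ≃
          {U : Submodule K
              ↥(Submodule.comap (mmap α0) (V' ⟨tgt α0, Ne.symm hloop⟩)) //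
            Module.finrank K U = e (src α0)}) ∧
      Nonempty
        ({W : ∀ r : V0, Submodule K (Mod r) //
            (∀ a : A, ∀ x ∈ W (src a), mmap a x ∈ W (tgt a)) ∧
            (∀ r : V0, Module.finrank K (W r) = e r) ∧
            (∀ r : {r : V0 // r ≠ src α0}, W r.val = V' r)} ≃
          {U : Submodule K (Fin (e (tgt α0)) → K) //
            Module.finrank K U = e (src α0)}) := by
  intro V' hcompat hrank
  set S : Submodule K (Mod (src α0)) :=
    Submodule.comap (mmap α0) (V' ⟨tgt α0, Ne.symm hloop⟩) with hS
  -- every W in the fibre has W (src α0) ≤ S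
  have hle : ∀ W : {W : ∀ r : V0, Submodule K (Mod r) //
      (∀ a : A, ∀ x ∈ W (src a), mmap a x ∈ W (tgt a)) ∧
      (∀ r : V0, Module.finrank K (W r) = e r) ∧
      (∀ r : {r : V0 // r ≠ src α0}, W r.val = V' r)},
      W.1 (src α0) ≤ S := by
    intro W x hx
    have := W.2.1 α0 x hx
    rw [W.2.2.2 ⟨tgt α0, Ne.symm hloop⟩] at this
    exact this
  have key : Nonempty
      ({W : ∀ r : V0, Submodule K (Mod r) //
          (∀ a : A, ∀ x ∈ W (src a), mmap a x ∈ W (tgt a)) ∧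
          (∀ r : V0, Module.finrank K (W r) = e r) ∧
          (∀ r : {r : V0 // r ≠ src α0}, W r.val = V' r)} ≃
        {U : Submodule K ↥S // Module.finrank K U = e (src α0)}) := by
    refine ⟨{
      toFun := fun W => ⟨Submodule.comap S.subtype (W.1 (src α0)), ?_⟩
      invFun := fun U => ⟨Function.update
          (fun r => if h : r = src α0 then ⊥ else V' ⟨r, h⟩) (src α0)
          (U.1.map S.subtype), ?_, ?_, ?_⟩
      left_inv := ?_
      right_inv := ?_ }⟩
    · rw [(Submodule.comapSubtypeEquivOfLe (hle W)).finrank_eq]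
      exact W.2.2.1 (src α0)
    · -- compatibility
      intro a x hx
      by_cases h : a = α0
      · subst h
        have hx' : x ∈ U.1.map S.subtype := by
          rwa [Function.update_self] at hx
        have hxS : x ∈ S := by
          rcases hx' with ⟨y, _, rfl⟩
          exact y.2
        rw [Function.update_of_ne (Ne.symm hloop), dif_neg (Ne.symm hloop)]
        exact hxS
      · obtain ⟨h1, h2⟩ := hend a h
        rw [Function.update_of_ne h1, dif_neg h1] at hx
        rw [Function.update_of_ne h2, dif_neg h2]
        exact hcompat a h1 h2 x hx
    · -- ranks
      intro r
      by_cases h : r = src α0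
      · subst h
        rw [Function.update_self, Submodule.finrank_map_subtype_eq]
        exact U.2
      · rw [Function.update_of_ne h, dif_neg h]
        exact hrank ⟨r, h⟩
    · -- restriction
      intro r
      rw [Function.update_of_ne r.2, dif_neg r.2]
    · -- left inverse
      intro W
      apply Subtype.ext
      funext r
      dsimp only
      by_cases h : r = src α0
      · subst h
        rw [Function.update_self, Submodule.map_comap_subtype,
          inf_eq_right.mpr (hle W)]
      · rw [Function.update_of_ne h, dif_neg h]
        exact (W.2.2.2 ⟨r, h⟩).symm
    · -- right inverse
      intro U
      apply Subtype.ext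
      dsimp only
      rw [Function.update_self]
      exact Submodule.comap_map_eq_of_injective S.injective_subtype U.1
  refine ⟨key, ?_⟩
  -- second bijection: S ≃ₗ (Fin (e (tgt α0)) → K)
  have hrS : Module.finrank K S = e (tgt α0) := by
    have hco : ((LinearEquiv.ofBijective (mmap α0) hiso :
        Mod (src α0) ≃ₗ[K] Mod (tgt α0)) : Mod (src α0) →ₗ[K] Mod (tgt α0)) =
        mmap α0 := rfl
    rw [hS, ← hco, Submodule.comap_equiv_eq_map_symm,
      ← ((LinearEquiv.ofBijective (mmap α0) hiso).symm.submoduleMap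
          (V' ⟨tgt α0, Ne.symm hloop⟩)).finrank_eq]
    exact hrank ⟨tgt α0, Ne.symm hloop⟩
  have g : (↥S) ≃ₗ[K] (Fin (e (tgt α0)) → K) :=
    LinearEquiv.ofFinrankEq _ _ (by rw [hrS, Module.finrank_fin_fun])
  have key2 : Nonempty ({U : Submodule K ↥S // Module.finrank K U = e (src α0)} ≃
      {U : Submodule K (Fin (e (tgt α0)) → K) //
        Module.finrank K U = e (src α0)}) := by
    refine ⟨{
      toFun := fun U => ⟨U.1.map (g : ↥S →ₗ[K] _), by
        rw [LinearEquiv.finrank_map_eq]; exact U.2⟩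
      invFun := fun U => ⟨U.1.map (g.symm : _ →ₗ[K] ↥S), by
        rw [LinearEquiv.finrank_map_eq]; exact U.2⟩
      left_inv := fun U => Subtype.ext (by
        dsimp only
        exact (Submodule.map_symm_eq_iff g).mpr rfl)
      right_inv := fun U => Subtype.ext (by
        dsimp only
        exact (Submodule.map_symm_eq_iff g).mp rfl) }⟩
  obtain ⟨f1⟩ := key
  obtain ⟨f2⟩ := key2
  exact ⟨f1.trans f2⟩
end
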